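/- arXiv:1710.03995 — 8 statements merged into one kernel-verified Lean document; each statement's English description precedes it below -/
import Mathlib

section
/- For any n×n complex matrices A and B, the absolute value of the trace of AB is at most the sum over i from 1 to n of σ_i(A)·σ_i(B), where σ_i denotes the i-th largest singular value (von Neumann's trace inequality). -/
open Matrix Finset

/-- The `i`-th largest singular value of an `n × n` complex matrix
(indexed by `i : Fin n`, with `i = 0` the largest). -/
noncomputable def singularValue {n : ℕ} (A : Matrix (Fin n) (Fin n) ℂ) (i : Fin n) : ℝ :=
  Real.sqrt ((((Matrix.isHermitian_conjTranspose_mul_self A)).eigenvalues ∘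
    Tuple.sort ((Matrix.isHermitian_conjTranspose_mul_self A)).eigenvalues) i.rev)

/-- Euclidean norm of the `j`-th column of `Z`. -/
noncomputable def colNorm {n : ℕ} (Z : Matrix (Fin n) (Fin n) ℂ) (j : Fin n) : ℝ :=
  Real.sqrt (∑ k, ‖Z k j‖ ^ 2)

/-- The `i`-th largest column norm of `Z` (decreasingly ordered `c_i(Z)`). -/
noncomputable def colNormSorted {n : ℕ} (Z : Matrix (Fin n) (Fin n) ℂ) (i : Fin n) : ℝ :=
  (colNorm Z ∘ Tuple.sort (colNorm Z)) i.rev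

section Aux

local notation "⟪" x ", " y "⟫" => @inner ℂ _ _ x y

private lemma sum3_swap' {α β γ M : Type*} [AddCommMonoid M] (s : Finset α) (t : Finset β)
    (u : Finset γ) (f : α → β → γ → M) :
    ∑ i ∈ s, ∑ j ∈ t, ∑ k ∈ u, f i j k = ∑ k ∈ u, ∑ i ∈ s, ∑ j ∈ t, f i j k := by
  calc ∑ i ∈ s, ∑ j ∈ t, ∑ k ∈ u, f i j k
      = ∑ i ∈ s, ∑ k ∈ u, ∑ j ∈ t, f i j k := Finset.sum_congr rfl fun i _ => Finset.sum_comm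
    _ = ∑ k ∈ u, ∑ i ∈ s, ∑ j ∈ t, f i j k := Finset.sum_comm

private lemma sum4_swap' (s t u v : Finset ℕ) (f : ℕ → ℕ → ℕ → ℕ → ℝ) :
    ∑ i ∈ s, ∑ j ∈ t, ∑ k ∈ u, ∑ l ∈ v, f i j k l
      = ∑ k ∈ u, ∑ l ∈ v, ∑ i ∈ s, ∑ j ∈ t, f i j k l := by
  calc ∑ i ∈ s, ∑ j ∈ t, ∑ k ∈ u, ∑ l ∈ v, f i j k l
      = ∑ i ∈ s, ∑ k ∈ u, ∑ j ∈ t, ∑ l ∈ v, f i j k l :=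
        Finset.sum_congr rfl fun i _ => Finset.sum_comm
    _ = ∑ k ∈ u, ∑ i ∈ s, ∑ j ∈ t, ∑ l ∈ v, f i j k l := Finset.sum_comm
    _ = ∑ k ∈ u, ∑ i ∈ s, ∑ l ∈ v, ∑ j ∈ t, f i j k l :=
        Finset.sum_congr rfl fun k _ => Finset.sum_congr rfl fun i _ => Finset.sum_comm
    _ = ∑ k ∈ u, ∑ l ∈ v, ∑ i ∈ s, ∑ j ∈ t, f i j k l :=
        Finset.sum_congr rfl fun k _ => Finset.sum_comm

private lemma key_nat (n : ℕ) (σ τ : ℕ → ℝ) (P : ℕ → ℕ → ℝ)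
    (hσa : Antitone σ) (hτa : Antitone τ)
    (hσn : σ n = 0) (hτn : τ n = 0)
    (hP0 : ∀ i j, 0 ≤ P i j)
    (hProw : ∀ i, ∑ j ∈ range n, P i j ≤ 1)
    (hPcol : ∀ j, ∑ i ∈ range n, P i j ≤ 1) :
    ∑ i ∈ range n, ∑ j ∈ range n, σ i * τ j * P i j ≤ ∑ i ∈ range n, σ i * τ i := by
  set a : ℕ → ℝ := fun k => σ k - σ (k+1) with ha
  set b : ℕ → ℝ := fun l => τ l - τ (l+1) with hb
  have ha0 : ∀ k, 0 ≤ a k := fun k => sub_nonneg.2 (hσa (Nat.le_succ k))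
  have hb0 : ∀ l, 0 ≤ b l := fun l => sub_nonneg.2 (hτa (Nat.le_succ l))
  have hfilter : ∀ i, (range n).filter (fun k => i ≤ k) = Ico i n := by
    intro i; ext k; simp [Finset.mem_Ico]; tauto
  have hσeq : ∀ i ∈ range n, σ i = ∑ k ∈ range n, if i ≤ k then a k else 0 := by
    intro i hi
    rw [Finset.sum_ite, Finset.sum_const_zero, add_zero, hfilter i]
    have h1 : ∑ k ∈ Ico i n, a k = σ i - σ n := by
      have := Finset.sum_Ico_eq_sub (fun k => a k) (le_of_lt (mem_range.1 hi))
      rw [this, Finset.sum_range_sub' σ, Finset.sum_range_sub' σ]; ring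
    rw [h1, hσn, sub_zero]
  have hτeq : ∀ j ∈ range n, τ j = ∑ l ∈ range n, if j ≤ l then b l else 0 := by
    intro j hj
    rw [Finset.sum_ite, Finset.sum_const_zero, add_zero, hfilter j]
    have h1 : ∑ l ∈ Ico j n, b l = τ j - τ n := by
      have := Finset.sum_Ico_eq_sub (fun l => b l) (le_of_lt (mem_range.1 hj))
      rw [this, Finset.sum_range_sub' τ, Finset.sum_range_sub' τ]; ring
    rw [h1, hτn, sub_zero]
  have hLHS : ∑ i ∈ range n, ∑ j ∈ range n, σ i * τ j * P i j
      = ∑ k ∈ range n, ∑ l ∈ range n, ∑ i ∈ range n, ∑ j ∈ range n,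
          a k * b l * ((if i ≤ k then (1:ℝ) else 0) * (if j ≤ l then (1:ℝ) else 0) * P i j) := by
    rw [← sum4_swap']
    refine Finset.sum_congr rfl fun i hi => Finset.sum_congr rfl fun j hj => ?_
    rw [hσeq i hi, hτeq j hj, Finset.sum_mul_sum, Finset.sum_mul]
    refine Finset.sum_congr rfl fun k _ => ?_
    rw [Finset.sum_mul]
    refine Finset.sum_congr rfl fun l _ => ?_
    by_cases h1 : i ≤ k <;> by_cases h2 : j ≤ l <;> simp [h1, h2]
  have hRHS : ∑ i ∈ range n, σ i * τ i
      = ∑ k ∈ range n, ∑ l ∈ range n, ∑ i ∈ range n,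
          a k * b l * ((if i ≤ k then (1:ℝ) else 0) * (if i ≤ l then (1:ℝ) else 0)) := by
    have := sum4_swap' (range n) {0} (range n) (range n)
      (fun i _ k l => a k * b l * ((if i ≤ k then (1:ℝ) else 0) * (if i ≤ l then (1:ℝ) else 0)))
    simp only [Finset.sum_singleton] at this
    rw [← this]
    refine Finset.sum_congr rfl fun i hi => ?_
    rw [hσeq i hi, hτeq i hi, Finset.sum_mul_sum]
    refine Finset.sum_congr rfl fun k _ => Finset.sum_congr rfl fun l _ => ?_
    by_cases h1 : i ≤ k <;> by_cases h2 : i ≤ l <;> simp [h1, h2]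
  rw [hLHS, hRHS]
  refine Finset.sum_le_sum fun k _ => Finset.sum_le_sum fun l _ => ?_
  simp only [← Finset.mul_sum]
  · refine mul_le_mul_of_nonneg_left ?_ (mul_nonneg (ha0 k) (hb0 l))
    have hSrow : ∑ i ∈ range n, ∑ j ∈ range n,
        (if i ≤ k then (1:ℝ) else 0) * (if j ≤ l then (1:ℝ) else 0) * P i j
        ≤ ∑ i ∈ range n, (if i ≤ k then (1:ℝ) else 0) := by
      refine Finset.sum_le_sum fun i _ => ?_
      by_cases h1 : i ≤ k
      · simp only [h1, if_true, one_mul]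
        calc ∑ j ∈ range n, (if j ≤ l then (1:ℝ) else 0) * P i j
            ≤ ∑ j ∈ range n, P i j := by
              refine Finset.sum_le_sum fun j _ => ?_
              by_cases h2 : j ≤ l <;> simp [h2, hP0 i j]
          _ ≤ 1 := hProw i
      · simp only [h1, if_false, zero_mul]
        exact le_of_eq (Finset.sum_eq_zero fun j _ => by ring)
    have hScol : ∑ i ∈ range n, ∑ j ∈ range n,
        (if i ≤ k then (1:ℝ) else 0) * (if j ≤ l then (1:ℝ) else 0) * P i j
        ≤ ∑ j ∈ range n, (if j ≤ l then (1:ℝ) else 0) := by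
      rw [Finset.sum_comm]
      refine Finset.sum_le_sum fun j _ => ?_
      by_cases h2 : j ≤ l
      · simp only [h2, if_true, mul_one]
        calc ∑ i ∈ range n, (if i ≤ k then (1:ℝ) else 0) * P i j
            ≤ ∑ i ∈ range n, P i j := by
              refine Finset.sum_le_sum fun i _ => ?_
              by_cases h1 : i ≤ k <;> simp [h1, hP0 i j]
          _ ≤ 1 := hPcol j
      · simp only [h2, if_false]
        refine le_of_eq (Finset.sum_eq_zero fun i _ => by ring)
    have hmin : ∑ i ∈ range n, (if i ≤ k then (1:ℝ) else 0) * (if i ≤ l then (1:ℝ) else 0)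
          = ∑ i ∈ range n, (if i ≤ min k l then (1:ℝ) else 0) := by
      refine Finset.sum_congr rfl fun i _ => ?_
      by_cases h1 : i ≤ k <;> by_cases h2 : i ≤ l <;>
        simp [h1, h2, le_min_iff]
    rw [hmin]
    rcases le_total k l with hkl | hkl
    · rw [min_eq_left hkl]; exact hSrow
    · rw [min_eq_right hkl]; exact hScol

private lemma key_fin {n : ℕ} (σ τ : Fin n → ℝ) (P : Fin n → Fin n → ℝ)
    (hσa : Antitone σ) (hτa : Antitone τ)
    (hσ0 : ∀ i, 0 ≤ σ i) (hτ0 : ∀ i, 0 ≤ τ i)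
    (hP0 : ∀ i j, 0 ≤ P i j)
    (hProw : ∀ i, ∑ j, P i j ≤ 1) (hPcol : ∀ j, ∑ i, P i j ≤ 1) :
    ∑ i, ∑ j, σ i * τ j * P i j ≤ ∑ i, σ i * τ i := by
  classical
  set σ' : ℕ → ℝ := fun k => if h : k < n then σ ⟨k, h⟩ else 0 with hσ'
  set τ' : ℕ → ℝ := fun k => if h : k < n then τ ⟨k, h⟩ else 0 with hτ'
  set P' : ℕ → ℕ → ℝ := fun k l =>
    if hk : k < n then (if hl : l < n then P ⟨k, hk⟩ ⟨l, hl⟩ else 0) else 0 with hP'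
  have hσ'a : Antitone σ' := by
    intro k l hkl
    simp only [hσ']
    by_cases hl : l < n
    · have hk : k < n := lt_of_le_of_lt hkl hl
      rw [dif_pos hl, dif_pos hk]
      exact hσa (by exact hkl)
    · rw [dif_neg hl]
      by_cases hk : k < n
      · rw [dif_pos hk]; exact hσ0 _
      · rw [dif_neg hk]
  have hτ'a : Antitone τ' := by
    intro k l hkl
    simp only [hτ']
    by_cases hl : l < n
    · have hk : k < n := lt_of_le_of_lt hkl hl
      rw [dif_pos hl, dif_pos hk]
      exact hτa (by exact hkl)
    · rw [dif_neg hl]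
      by_cases hk : k < n
      · rw [dif_pos hk]; exact hτ0 _
      · rw [dif_neg hk]
  have key := key_nat n σ' τ' P' hσ'a hτ'a (by simp [hσ']) (by simp [hτ'])
    (fun i j => by
      simp only [hP']
      by_cases hi : i < n
      · by_cases hj : j < n
        · rw [dif_pos hi, dif_pos hj]; exact hP0 _ _
        · rw [dif_pos hi, dif_neg hj]
      · rw [dif_neg hi])
    (fun i => by
      by_cases hi : i < n
      · calc ∑ j ∈ range n, P' i j = ∑ j, P ⟨i, hi⟩ j := by
              rw [Finset.sum_range fun j => P' i j]
              refine Fin.sum_congr' _ rfl |>.symm.trans ?_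
              refine Finset.sum_congr rfl fun j _ => ?_
              simp [hP', hi, j.isLt]
          _ ≤ 1 := hProw _
      · calc ∑ j ∈ range n, P' i j = 0 := by
              refine Finset.sum_eq_zero fun j _ => by simp [hP', hi]
          _ ≤ 1 := zero_le_one)
    (fun j => by
      by_cases hj : j < n
      · calc ∑ i ∈ range n, P' i j = ∑ i, P i ⟨j, hj⟩ := by
              rw [Finset.sum_range fun i => P' i j]
              refine Fin.sum_congr' _ rfl |>.symm.trans ?_
              refine Finset.sum_congr rfl fun i _ => ?_
              simp [hP', hj, i.isLt]
          _ ≤ 1 := hPcol _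
      · calc ∑ i ∈ range n, P' i j = 0 := by
              refine Finset.sum_eq_zero fun i _ => by simp [hP', hj]
          _ ≤ 1 := zero_le_one)
  calc ∑ i, ∑ j, σ i * τ j * P i j
      = ∑ i ∈ range n, ∑ j ∈ range n, σ' i * τ' j * P' i j := by
        rw [← Fin.sum_univ_eq_sum_range]
        refine Finset.sum_congr rfl fun i _ => ?_
        rw [← Fin.sum_univ_eq_sum_range]
        refine Finset.sum_congr rfl fun j _ => ?_
        simp [hσ', hτ', hP', i.isLt, j.isLt]
    _ ≤ ∑ i ∈ range n, σ' i * τ' i := key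
    _ = ∑ i, σ i * τ i := by
        rw [← Fin.sum_univ_eq_sum_range]
        refine Finset.sum_congr rfl fun i _ => ?_
        simp [hσ', hτ', i.isLt]

lemma inner_eq_dot {n : ℕ} (x y : EuclideanSpace ℂ (Fin n)) :
    ⟪x, y⟫ = star (x : Fin n → ℂ) ⬝ᵥ (y : Fin n → ℂ) := by
  simp [PiLp.inner_apply, dotProduct, RCLike.inner_apply, mul_comm]

private lemma mulVec_sum' {n : ℕ} (A : Matrix (Fin n) (Fin n) ℂ) (s : Finset (Fin n))
    (f : Fin n → (Fin n → ℂ)) : A *ᵥ (∑ i ∈ s, f i) = ∑ i ∈ s, A *ᵥ f i := by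
  simp only [← Matrix.mulVecLin_apply, map_sum]

private lemma mulVec_smul' {n : ℕ} (A : Matrix (Fin n) (Fin n) ℂ) (c : ℂ) (y : Fin n → ℂ) :
    A *ᵥ (c • y) = c • (A *ᵥ y) := by
  rw [← Matrix.mulVecLin_apply, ← Matrix.mulVecLin_apply, LinearMap.map_smul]

private lemma dotProduct_sum' {n : ℕ} (x : Fin n → ℂ) (s : Finset (Fin n))
    (f : Fin n → (Fin n → ℂ)) : x ⬝ᵥ (∑ i ∈ s, f i) = ∑ i ∈ s, x ⬝ᵥ f i := by
  simp only [dotProduct, Finset.sum_apply, Finset.mul_sum]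
  exact Finset.sum_comm

private lemma parseval_onb {n : ℕ} (b : OrthonormalBasis (Fin n) ℂ (EuclideanSpace ℂ (Fin n)))
    (y : EuclideanSpace ℂ (Fin n)) : ∑ j, ‖⟪b j, y⟫‖^2 = ‖y‖^2 := by
  have h1 : ‖b.repr y‖ = ‖y‖ := b.repr.norm_map y
  rw [EuclideanSpace.norm_eq] at h1
  have h2 : ∑ j, ‖b.repr y j‖^2 = ‖y‖^2 := by
    rw [← h1, Real.sq_sqrt (Finset.sum_nonneg fun j _ => sq_nonneg _)]
  rw [← h2]
  exact Finset.sum_congr rfl fun j _ => by rw [b.repr_apply_apply]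

private lemma trace_eq_sum_inner_onb {n : ℕ} (M : Matrix (Fin n) (Fin n) ℂ)
    (b : OrthonormalBasis (Fin n) ℂ (EuclideanSpace ℂ (Fin n))) :
    M.trace = ∑ j, star (b j : Fin n → ℂ) ⬝ᵥ (M *ᵥ (b j : Fin n → ℂ)) := by
  set U : Matrix (Fin n) (Fin n) ℂ := Matrix.of fun k j => b j k with hU
  have h1 : Uᴴ * U = 1 := by
    ext j j'
    have horth := orthonormal_iff_ite.mp b.orthonormal j j'
    rw [inner_eq_dot] at horth
    simp only [Matrix.mul_apply, Matrix.conjTranspose_apply, Matrix.one_apply, hU,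
      Matrix.of_apply] at horth ⊢
    simpa [dotProduct] using horth
  have h2 : U * Uᴴ = 1 := mul_eq_one_comm.mp h1
  have h3 : ∀ m k : Fin n, ∑ j, (b j : Fin n → ℂ) m * star ((b j : Fin n → ℂ) k)
      = if m = k then 1 else 0 := by
    intro m k
    have := congrArg (fun X => X m k) h2
    simpa [Matrix.mul_apply, Matrix.conjTranspose_apply, Matrix.one_apply, hU] using this
  calc M.trace = ∑ k, M k k := rfl
    _ = ∑ k, ∑ m, M k m * (if m = k then 1 else 0) := by
        refine Finset.sum_congr rfl fun k _ => ?_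
        simp
    _ = ∑ k, ∑ m, M k m * ∑ j, (b j : Fin n → ℂ) m * star ((b j : Fin n → ℂ) k) := by
        refine Finset.sum_congr rfl fun k _ => Finset.sum_congr rfl fun m _ => by rw [h3]
    _ = ∑ j, star (b j : Fin n → ℂ) ⬝ᵥ (M *ᵥ (b j : Fin n → ℂ)) := by
        simp only [dotProduct, Matrix.mulVec, Finset.mul_sum, Pi.star_apply]
        rw [sum3_swap']
        refine Finset.sum_congr rfl fun j _ => Finset.sum_congr rfl fun k _ =>
          Finset.sum_congr rfl fun m _ => by ring

private lemma singularValue_nonneg {n : ℕ} (A : Matrix (Fin n) (Fin n) ℂ) (i : Fin n) :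
    0 ≤ singularValue A i := Real.sqrt_nonneg _

private lemma singularValue_antitone {n : ℕ} (A : Matrix (Fin n) (Fin n) ℂ) :
    Antitone (singularValue A) := by
  intro i j hij
  unfold singularValue
  exact Real.sqrt_le_sqrt (Tuple.monotone_sort _ (Fin.rev_le_rev.2 hij))

private lemma svd_data {n : ℕ} (A : Matrix (Fin n) (Fin n) ℂ) :
    ∃ (v : OrthonormalBasis (Fin n) ℂ (EuclideanSpace ℂ (Fin n)))
      (u : Fin n → EuclideanSpace ℂ (Fin n)),
      (∀ i, A *ᵥ (v i : Fin n → ℂ) = (singularValue A i : ℂ) • (u i : Fin n → ℂ)) ∧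
      (∀ i, singularValue A i = 0 → u i = 0) ∧
      (∀ i j, singularValue A i ≠ 0 → singularValue A j ≠ 0 →
        ⟪u i, u j⟫ = if i = j then 1 else 0) := by
  classical
  set hA := Matrix.isHermitian_conjTranspose_mul_self A with hhA
  set μ := hA.eigenvalues with hμ
  set q : Equiv.Perm (Fin n) := (Fin.revPerm).trans (Tuple.sort μ) with hq
  have hsv : ∀ i, singularValue A i = Real.sqrt (μ (q i)) := fun i => rfl
  have hμ0 : ∀ i, 0 ≤ μ i := Matrix.eigenvalues_conjTranspose_mul_self_nonneg A
  have hsq : ∀ i, (singularValue A i)^2 = μ (q i) := fun i => by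
    rw [hsv i, Real.sq_sqrt (hμ0 (q i))]
  set v := hA.eigenvectorBasis.reindex q.symm with hv
  have hvq : ∀ i, v i = hA.eigenvectorBasis (q i) := fun i => by
    rw [hv, OrthonormalBasis.reindex_apply, Equiv.symm_symm]
  have hinner : ∀ i j, star ((A *ᵥ (v i : Fin n → ℂ))) ⬝ᵥ (A *ᵥ (v j : Fin n → ℂ))
      = if i = j then (μ (q j) : ℂ) else 0 := by
    intro i j
    rw [star_mulVec, ← dotProduct_mulVec, mulVec_mulVec]
    have heig : (Aᴴ * A) *ᵥ (v j : Fin n → ℂ) = μ (q j) • (v j : Fin n → ℂ) := by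
      rw [hvq j]; exact hA.mulVec_eigenvectorBasis (q j)
    rw [heig]
    have : star ((v i : Fin n → ℂ)) ⬝ᵥ (μ (q j) • (v j : Fin n → ℂ))
        = μ (q j) • (star ((v i : Fin n → ℂ)) ⬝ᵥ (v j : Fin n → ℂ)) := by
      rw [dotProduct_smul]
    rw [this, ← inner_eq_dot (v i) (v j), orthonormal_iff_ite.mp v.orthonormal i j]
    by_cases h : i = j <;> simp [h, Complex.real_smul]
  set u : Fin n → EuclideanSpace ℂ (Fin n) := fun i =>
    if singularValue A i = 0 then 0 else WithLp.toLp 2 (((singularValue A i : ℂ)⁻¹) • (A *ᵥ (v i : Fin n → ℂ)))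
    with hu
  have hAv0 : ∀ i, singularValue A i = 0 → A *ᵥ (v i : Fin n → ℂ) = 0 := by
    intro i h0
    have h1 : @inner ℂ _ _ (WithLp.toLp 2 (A *ᵥ (v i : Fin n → ℂ)) : EuclideanSpace ℂ (Fin n))
        (WithLp.toLp 2 (A *ᵥ (v i : Fin n → ℂ)) : EuclideanSpace ℂ (Fin n)) = 0 := by
      rw [inner_eq_dot, WithLp.ofLp_toLp, hinner i i, if_pos rfl, ← hsq i, h0]
      norm_num
    have h2 : (WithLp.toLp 2 (A *ᵥ (v i : Fin n → ℂ)) : EuclideanSpace ℂ (Fin n)) = 0 :=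
      inner_self_eq_zero.1 h1
    exact congrArg WithLp.ofLp h2
  refine ⟨v, u, ?_, ?_, ?_⟩
  · intro i
    by_cases h0 : singularValue A i = 0
    · simp only [hu]
      rw [if_pos h0, hAv0 i h0]
      simp
    · simp only [hu]
      rw [if_neg h0, WithLp.ofLp_toLp, smul_smul,
        mul_inv_cancel₀ (by exact_mod_cast h0 : (singularValue A i : ℂ) ≠ 0), one_smul]
  · intro i h0; simp only [hu]; rw [if_pos h0]
  · intro i j hi hj
    simp only [hu]
    rw [if_neg hi, if_neg hj]
    rw [WithLp.toLp_smul, WithLp.toLp_smul, inner_smul_left, inner_smul_right, inner_eq_dot,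
      WithLp.ofLp_toLp, WithLp.ofLp_toLp, hinner i j]
    by_cases h : i = j
    · subst h
      rw [if_pos rfl, ← hsq i]
      have : (singularValue A i : ℂ) ≠ 0 := by exact_mod_cast hi
      rw [if_pos rfl]
      rw [map_inv₀, Complex.conj_ofReal, Complex.ofReal_pow]
      field_simp
    · rw [if_neg h, if_neg h, mul_zero, mul_zero]

private lemma bessel_family {n : ℕ} (u : Fin n → EuclideanSpace ℂ (Fin n)) (g : Fin n → ℝ)
    (hg0 : ∀ i, g i = 0 → u i = 0)
    (horth : ∀ i j, g i ≠ 0 → g j ≠ 0 → ⟪u i, u j⟫ = if i = j then 1 else 0)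
    (y : EuclideanSpace ℂ (Fin n)) :
    ∑ i, ‖⟪u i, y⟫‖^2 ≤ ‖y‖^2 := by
  classical
  set s : Finset (Fin n) := Finset.univ.filter (fun i => g i ≠ 0) with hs
  have horth' : Orthonormal ℂ (fun i : s => u i) := by
    rw [orthonormal_iff_ite]
    intro i j
    rw [horth i j (Finset.mem_filter.1 i.2).2 (Finset.mem_filter.1 j.2).2]
    by_cases h : (i : Fin n) = (j : Fin n)
    · rw [if_pos h, if_pos (Subtype.ext h)]
    · rw [if_neg h, if_neg (fun hc => h (congrArg Subtype.val hc))]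
  calc ∑ i, ‖⟪u i, y⟫‖^2
      = ∑ i ∈ s, ‖⟪u i, y⟫‖^2 := by
        refine (Finset.sum_subset (Finset.subset_univ s) ?_).symm
        intro i _ hi
        have : g i = 0 := by
          by_contra hg
          exact hi (Finset.mem_filter.2 ⟨Finset.mem_univ i, hg⟩)
        rw [hg0 i this]
        simp
    _ = ∑ i : s, ‖⟪u (i : Fin n), y⟫‖^2 := (Finset.sum_coe_sort s _).symm
    _ ≤ ‖y‖^2 := horth'.sum_inner_products_le y

private lemma norm_family_le_one {n : ℕ} (u : Fin n → EuclideanSpace ℂ (Fin n)) (g : Fin n → ℝ)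
    (hg0 : ∀ i, g i = 0 → u i = 0)
    (horth : ∀ i j, g i ≠ 0 → g j ≠ 0 → ⟪u i, u j⟫ = if i = j then 1 else 0)
    (i : Fin n) : ‖u i‖ ≤ 1 := by
  by_cases h : g i = 0
  · rw [hg0 i h]; simp
  · have h1 : ⟪u i, u i⟫ = 1 := by rw [horth i i h h, if_pos rfl]
    have h3 : ‖u i‖^2 = 1 := by
      have h2 := inner_self_eq_norm_sq (𝕜 := ℂ) (u i)
      rw [h1] at h2
      simpa using h2.symm
    nlinarith [norm_nonneg (u i)]

end Aux

/-- von Neumann's trace inequality. -/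
theorem vonNeumann_trace_inequality {n : ℕ} (A B : Matrix (Fin n) (Fin n) ℂ) :
    ‖(A * B).trace‖ ≤ ∑ i, singularValue A i * singularValue B i := by
  classical
  obtain ⟨v, u, hAv, hu0, hu_orth⟩ := svd_data A
  obtain ⟨x, w, hBx, hw0, hw_orth⟩ := svd_data B
  set σ := singularValue A with hσdef
  set τ := singularValue B with hτdef
  -- trace expansion
  have htr : (A * B).trace = ∑ j, ∑ i, (τ j : ℂ) *
      ((@inner ℂ _ _ (v i) (w j)) * ((σ i : ℂ) * (@inner ℂ _ _ (x j) (u i)))) := by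
    rw [trace_eq_sum_inner_onb (A * B) x]
    refine Finset.sum_congr rfl fun j _ => ?_
    rw [← mulVec_mulVec, hBx j, mulVec_smul' A, dotProduct_smul, smul_eq_mul, ← Finset.mul_sum]
    congr 1
    have hexp : (w j : Fin n → ℂ) = ∑ i, (@inner ℂ _ _ (v i) (w j)) • (v i : Fin n → ℂ) := by
      conv_lhs => rw [← v.sum_repr (w j)]
      rw [WithLp.ofLp_sum]
      exact Finset.sum_congr rfl fun i _ => by rw [WithLp.ofLp_smul, v.repr_apply_apply]
    conv_lhs => rw [hexp]
    rw [mulVec_sum', dotProduct_sum']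
    refine Finset.sum_congr rfl fun i _ => ?_
    rw [mulVec_smul' A, hAv i, dotProduct_smul, dotProduct_smul, smul_eq_mul, smul_eq_mul,
      inner_eq_dot (x j) (u i)]
  -- bound
  set P : Fin n → Fin n → ℝ := fun i j => ‖@inner ℂ _ _ (v i) (w j)‖^2 with hP
  set Q : Fin n → Fin n → ℝ := fun i j => ‖@inner ℂ _ _ (x j) (u i)‖^2 with hQ
  have habs : ‖(A * B).trace‖
      ≤ ∑ j, ∑ i, σ i * τ j * ((P i j + Q i j) / 2) := by
    rw [htr]
    refine le_trans (norm_sum_le _ _) ?_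
    refine Finset.sum_le_sum fun j _ => ?_
    refine le_trans (norm_sum_le _ _) ?_
    refine Finset.sum_le_sum fun i _ => ?_
    rw [norm_mul, norm_mul, norm_mul, Complex.norm_real, Complex.norm_real, Real.norm_eq_abs, Real.norm_eq_abs,
      abs_of_nonneg (singularValue_nonneg B j), abs_of_nonneg (singularValue_nonneg A i)]
    have hab : ‖@inner ℂ _ _ (v i) (w j)‖ * ‖@inner ℂ _ _ (x j) (u i)‖
        ≤ (P i j + Q i j) / 2 := by
      have h1 : ‖@inner ℂ _ _ (v i) (w j)‖ = ‖@inner ℂ _ _ (v i) (w j)‖ := rfl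
      have h2 : ‖@inner ℂ _ _ (x j) (u i)‖ = ‖@inner ℂ _ _ (x j) (u i)‖ := rfl
      rw [h1, h2, hP, hQ]
      nlinarith [sq_nonneg (‖@inner ℂ _ _ (v i) (w j)‖ - ‖@inner ℂ _ _ (x j) (u i)‖),
        norm_nonneg (@inner ℂ _ _ (v i) (w j)), norm_nonneg (@inner ℂ _ _ (x j) (u i))]
    calc τ j * (‖@inner ℂ _ _ (v i) (w j)‖ *
            (σ i * ‖@inner ℂ _ _ (x j) (u i)‖))
        = σ i * τ j * (‖@inner ℂ _ _ (v i) (w j)‖ *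
            ‖@inner ℂ _ _ (x j) (u i)‖) := by ring
      _ ≤ σ i * τ j * ((P i j + Q i j) / 2) :=
          mul_le_mul_of_nonneg_left hab
            (mul_nonneg (singularValue_nonneg A i) (singularValue_nonneg B j))
  -- apply the rearrangement bound to P and Q
  have hPbound : ∑ i, ∑ j, σ i * τ j * P i j ≤ ∑ i, σ i * τ i := by
    refine key_fin σ τ P (singularValue_antitone A) (singularValue_antitone B)
      (singularValue_nonneg A) (singularValue_nonneg B)
      (fun i j => sq_nonneg _) (fun i => ?_) (fun j => ?_)
    · -- row sums of P : Bessel w.r.t. family w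
      have : ∀ j, P i j = ‖@inner ℂ _ _ (w j) (v i)‖^2 := by
        intro j; rw [hP, ← norm_inner_symm]
      calc ∑ j, P i j = ∑ j, ‖@inner ℂ _ _ (w j) (v i)‖^2 :=
            Finset.sum_congr rfl fun j _ => this j
        _ ≤ ‖v i‖^2 := bessel_family w τ hw0 hw_orth (v i)
        _ = 1 := by rw [v.orthonormal.1 i]; norm_num
    · -- column sums of P : Parseval w.r.t. ONB v
      calc ∑ i, P i j = ‖w j‖^2 := parseval_onb v (w j)
        _ ≤ 1 := by
            have := norm_family_le_one w τ hw0 hw_orth j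
            nlinarith [norm_nonneg (w j)]
  have hQbound : ∑ i, ∑ j, σ i * τ j * Q i j ≤ ∑ i, σ i * τ i := by
    refine key_fin σ τ Q (singularValue_antitone A) (singularValue_antitone B)
      (singularValue_nonneg A) (singularValue_nonneg B)
      (fun i j => sq_nonneg _) (fun i => ?_) (fun j => ?_)
    · -- row sums of Q : Parseval w.r.t. ONB x
      calc ∑ j, Q i j = ‖u i‖^2 := parseval_onb x (u i)
        _ ≤ 1 := by
            have := norm_family_le_one u σ hu0 hu_orth i
            nlinarith [norm_nonneg (u i)]
    · -- column sums of Q : Bessel w.r.t. family u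
      have : ∀ i, Q i j = ‖@inner ℂ _ _ (u i) (x j)‖^2 := by
        intro i; rw [hQ, ← norm_inner_symm]
      calc ∑ i, Q i j = ∑ i, ‖@inner ℂ _ _ (u i) (x j)‖^2 :=
            Finset.sum_congr rfl fun i _ => this i
        _ ≤ ‖x j‖^2 := bessel_family u σ hu0 hu_orth (x j)
        _ = 1 := by rw [x.orthonormal.1 j]; norm_num
  calc ‖(A * B).trace‖
      ≤ ∑ j, ∑ i, σ i * τ j * ((P i j + Q i j) / 2) := habs
    _ = (∑ i, ∑ j, σ i * τ j * P i j + ∑ i, ∑ j, σ i * τ j * Q i j) / 2 := by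
        have hsplit : (∑ i, ∑ j, σ i * τ j * P i j + ∑ i, ∑ j, σ i * τ j * Q i j) / 2
            = ∑ i, ∑ j, (σ i * τ j * P i j + σ i * τ j * Q i j) / 2 := by
          rw [← Finset.sum_add_distrib, Finset.sum_div]
          refine Finset.sum_congr rfl fun i _ => ?_
          rw [← Finset.sum_add_distrib, Finset.sum_div]
        rw [hsplit, Finset.sum_comm]
        exact Finset.sum_congr rfl fun j _ => Finset.sum_congr rfl fun i _ => by ring
    _ ≤ (∑ i, σ i * τ i + ∑ i, σ i * τ i) / 2 := by
        have := add_le_add hPbound hQbound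
        linarith
    _ = ∑ i, σ i * τ i := by ring
end

section
/- Let X and Y be n×n complex matrices such that every column of X and every column of Y has Euclidean norm at most 1, and let S be an n×n contraction (operator norm at most 1). Then the operator norm (largest singular value) of the Hadamard product (X*Y) ∘ S is at most 1. -/
open Matrix Finset

section helpers

variable {n : ℕ}

lemma dot_self_eq (v : Fin n → ℂ) :
    star v ⬝ᵥ v = ((∑ i, Complex.normSq (v i) : ℝ) : ℂ) := by
  push_cast
  simp only [dotProduct, Pi.star_apply, RCLike.star_def]
  exact Finset.sum_congr rfl fun i _ => (Complex.normSq_eq_conj_mul_self).symm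

lemma quad_eq (A : Matrix (Fin n) (Fin n) ℂ) (v : Fin n → ℂ) :
    star v ⬝ᵥ ((Aᴴ * A) *ᵥ v) = ((∑ i, Complex.normSq ((A *ᵥ v) i) : ℝ) : ℂ) := by
  rw [← mulVec_mulVec, dotProduct_mulVec, ← star_mulVec, ← dot_self_eq]

lemma eig_le_of_bound (A : Matrix (Fin n) (Fin n) ℂ)
    (h : ∀ v, ∑ i, Complex.normSq ((A *ᵥ v) i) ≤ ∑ i, Complex.normSq (v i)) (i : Fin n) :
    (Matrix.isHermitian_conjTranspose_mul_self A).eigenvalues i ≤ 1 := by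
  set hA := Matrix.isHermitian_conjTranspose_mul_self A
  set u : Fin n → ℂ := ⇑(hA.eigenvectorBasis i) with hu
  have hnorm : ‖hA.eigenvectorBasis i‖ = 1 := hA.eigenvectorBasis.orthonormal.1 i
  have hsum : ∑ j, Complex.normSq (u j) = 1 := by
    have h1 := EuclideanSpace.norm_eq (hA.eigenvectorBasis i)
    rw [hnorm] at h1
    have h0 : (0:ℝ) ≤ ∑ j, ‖(hA.eigenvectorBasis i) j‖ ^ 2 :=
      Finset.sum_nonneg fun _ _ => sq_nonneg _
    have h2 : ∑ j, ‖(hA.eigenvectorBasis i) j‖ ^ 2 = 1 := by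
      nlinarith [Real.sq_sqrt h0]
    rw [← h2]
    exact Finset.sum_congr rfl fun j _ => by
      rw [Complex.normSq_eq_norm_sq]
  rw [hA.eigenvalues_eq i, ← hu, quad_eq A u, RCLike.re_to_complex, Complex.ofReal_re]
  calc ∑ j, Complex.normSq ((A *ᵥ u) j) ≤ ∑ j, Complex.normSq (u j) := h u
    _ = 1 := hsum

lemma bound_of_eig (S : Matrix (Fin n) (Fin n) ℂ)
    (h : ∀ i, (Matrix.isHermitian_conjTranspose_mul_self S).eigenvalues i ≤ 1) (v : Fin n → ℂ) :
    ∑ i, Complex.normSq ((S *ᵥ v) i) ≤ ∑ i, Complex.normSq (v i) := by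
  classical
  set hA := Matrix.isHermitian_conjTranspose_mul_self S with hAdef
  set U : Matrix (Fin n) (Fin n) ℂ := (hA.eigenvectorUnitary : Matrix (Fin n) (Fin n) ℂ) with hU
  set w : Fin n → ℂ := star U *ᵥ v with hw
  have h1 : star v ᵥ* U = star w := by
    rw [hw, star_mulVec, star_eq_conjTranspose, conjTranspose_conjTranspose]
  have hUU : U * star U = 1 := (Matrix.mem_unitaryGroup_iff).mp hA.eigenvectorUnitary.2
  have hdot : star v ⬝ᵥ ((Sᴴ * S) *ᵥ v)
      = ∑ i, (hA.eigenvalues i : ℂ) * (Complex.normSq (w i) : ℂ) := by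
    conv_lhs => rw [hA.spectral_theorem, Unitary.conjStarAlgAut_apply]
    rw [← mulVec_mulVec, ← mulVec_mulVec, dotProduct_mulVec, h1, ← hw]
    simp only [dotProduct, mulVec_diagonal, Function.comp_apply, Pi.star_apply,
      RCLike.star_def]
    refine Finset.sum_congr rfl fun i _ => ?_
    rw [Complex.normSq_eq_conj_mul_self]
    rw [mul_left_comm]
    norm_num [Complex.coe_algebraMap]
  have hww : ∑ i, Complex.normSq (w i) = ∑ i, Complex.normSq (v i) := by
    have : star w ⬝ᵥ w = star v ⬝ᵥ v := by
      calc star w ⬝ᵥ w = (star v ᵥ* U) ⬝ᵥ (star U *ᵥ v) := by rw [h1, ← hw]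
        _ = ((star v ᵥ* U) ᵥ* star U) ⬝ᵥ v := by rw [dotProduct_mulVec]
        _ = (star v ᵥ* (U * star U)) ⬝ᵥ v := by rw [vecMul_vecMul]
        _ = star v ⬝ᵥ v := by rw [hUU, vecMul_one]
    rw [dot_self_eq, dot_self_eq] at this
    exact_mod_cast this
  have hre : ∑ i, Complex.normSq ((S *ᵥ v) i)
      = ∑ i, hA.eigenvalues i * Complex.normSq (w i) := by
    have := (quad_eq S v).symm.trans hdot
    have h2 : ((∑ i, hA.eigenvalues i * Complex.normSq (w i) : ℝ) : ℂ)
        = ∑ i, (hA.eigenvalues i : ℂ) * (Complex.normSq (w i) : ℂ) := by push_cast; rfl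
    rw [← h2] at this
    exact_mod_cast this
  rw [hre, ← hww]
  refine Finset.sum_le_sum fun i _ => ?_
  calc hA.eigenvalues i * Complex.normSq (w i) ≤ 1 * Complex.normSq (w i) :=
        mul_le_mul_of_nonneg_right (h i) (Complex.normSq_nonneg _)
    _ = _ := one_mul _

end helpers

lemma real_cs (f g : Fin n → ℝ) :
    ∑ i, f i * g i ≤ Real.sqrt (∑ i, f i ^ 2) * Real.sqrt (∑ i, g i ^ 2) := by
  have h := Finset.sum_mul_sq_le_sq_mul_sq Finset.univ f g
  rcases le_or_gt (∑ i, f i * g i) 0 with h0 | h0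
  · exact h0.trans (mul_nonneg (Real.sqrt_nonneg _) (Real.sqrt_nonneg _))
  · have := Real.sqrt_le_sqrt h
    rwa [Real.sqrt_sq h0.le,
      Real.sqrt_mul (Finset.sum_nonneg fun i _ => sq_nonneg _)] at this

lemma cs_complex (a c : Fin n → ℂ) :
    ‖star a ⬝ᵥ c‖ ≤
      Real.sqrt (∑ i, Complex.normSq (a i)) * Real.sqrt (∑ i, Complex.normSq (c i)) := by
  have h1 : ‖star a ⬝ᵥ c‖ ≤ ∑ i, ‖a i‖ * ‖c i‖ := by
    refine (norm_sum_le _ _).trans ?_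
    refine Finset.sum_le_sum fun i _ => ?_
    simp [Pi.star_apply, RCLike.star_def, _root_.map_mul]
  refine h1.trans ?_
  have h2 := real_cs (fun i => ‖a i‖) (fun i => ‖c i‖)
  simpa only [Complex.sq_norm] using h2

lemma sum_rot (F : Fin n → Fin n → Fin n → ℂ) :
    ∑ i, ∑ j, ∑ k, F i j k = ∑ k, ∑ i, ∑ j, F i j k := by
  have h1 : ∀ i, ∑ j, ∑ k, F i j k = ∑ k, ∑ j, F i j k := fun i => Finset.sum_comm
  simp_rw [h1]
  exact Finset.sum_comm

lemma hadamard_bilinear (X Y S : Matrix (Fin n) (Fin n) ℂ)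
    (hX : ∀ i, ∑ k, Complex.normSq (X k i) ≤ 1)
    (hY : ∀ i, ∑ k, Complex.normSq (Y k i) ≤ 1)
    (hS : ∀ v, ∑ i, Complex.normSq ((S *ᵥ v) i) ≤ ∑ i, Complex.normSq (v i))
    (w v : Fin n → ℂ) :
    ‖star w ⬝ᵥ ((Matrix.hadamard (Xᴴ * Y) S) *ᵥ v)‖ ≤
      Real.sqrt (∑ i, Complex.normSq (w i)) * Real.sqrt (∑ i, Complex.normSq (v i)) := by
  set a : Fin n → Fin n → ℂ := fun k i => X k i * w i with ha
  set b : Fin n → Fin n → ℂ := fun k j => Y k j * v j with hb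
  have key : star w ⬝ᵥ ((Matrix.hadamard (Xᴴ * Y) S) *ᵥ v)
      = ∑ k, star (a k) ⬝ᵥ (S *ᵥ b k) := by
    simp only [dotProduct, mulVec, hadamard_apply, Matrix.mul_apply, conjTranspose_apply,
      Pi.star_apply, RCLike.star_def, _root_.map_mul, Finset.sum_mul, Finset.mul_sum, ha, hb]
    rw [sum_rot]
    refine Finset.sum_congr rfl fun k _ => ?_
    refine Finset.sum_congr rfl fun i _ => ?_
    refine Finset.sum_congr rfl fun j _ => ?_
    ring
  have haN : ∑ k, ∑ i, Complex.normSq (a k i) ≤ ∑ i, Complex.normSq (w i) := by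
    rw [Finset.sum_comm]
    refine Finset.sum_le_sum fun i _ => ?_
    have : ∑ k, Complex.normSq (a k i) = (∑ k, Complex.normSq (X k i)) * Complex.normSq (w i) := by
      rw [Finset.sum_mul]
      exact Finset.sum_congr rfl fun k _ => by rw [ha]; exact Complex.normSq_mul _ _
    rw [this]
    calc (∑ k, Complex.normSq (X k i)) * Complex.normSq (w i)
        ≤ 1 * Complex.normSq (w i) :=
          mul_le_mul_of_nonneg_right (hX i) (Complex.normSq_nonneg _)
      _ = _ := one_mul _
  have hbN : ∑ k, ∑ i, Complex.normSq (b k i) ≤ ∑ i, Complex.normSq (v i) := by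
    rw [Finset.sum_comm]
    refine Finset.sum_le_sum fun i _ => ?_
    have : ∑ k, Complex.normSq (b k i) = (∑ k, Complex.normSq (Y k i)) * Complex.normSq (v i) := by
      rw [Finset.sum_mul]
      exact Finset.sum_congr rfl fun k _ => by rw [hb]; exact Complex.normSq_mul _ _
    rw [this]
    calc (∑ k, Complex.normSq (Y k i)) * Complex.normSq (v i)
        ≤ 1 * Complex.normSq (v i) :=
          mul_le_mul_of_nonneg_right (hY i) (Complex.normSq_nonneg _)
      _ = _ := one_mul _
  calc ‖star w ⬝ᵥ ((Matrix.hadamard (Xᴴ * Y) S) *ᵥ v)‖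
      = ‖∑ k, star (a k) ⬝ᵥ (S *ᵥ b k)‖ := by rw [key]
    _ ≤ ∑ k, ‖star (a k) ⬝ᵥ (S *ᵥ b k)‖ := norm_sum_le _ _
    _ ≤ ∑ k, Real.sqrt (∑ i, Complex.normSq (a k i))
          * Real.sqrt (∑ i, Complex.normSq ((S *ᵥ b k) i)) :=
        Finset.sum_le_sum fun k _ => cs_complex _ _
    _ ≤ ∑ k, Real.sqrt (∑ i, Complex.normSq (a k i))
          * Real.sqrt (∑ i, Complex.normSq (b k i)) :=
        Finset.sum_le_sum fun k _ =>
          mul_le_mul_of_nonneg_left (Real.sqrt_le_sqrt (hS _)) (Real.sqrt_nonneg _)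
    _ ≤ Real.sqrt (∑ k, ∑ i, Complex.normSq (a k i))
          * Real.sqrt (∑ k, ∑ i, Complex.normSq (b k i)) := by
        have h2 := real_cs (fun k => Real.sqrt (∑ i, Complex.normSq (a k i)))
          (fun k => Real.sqrt (∑ i, Complex.normSq (b k i)))
        simpa only [Real.sq_sqrt
            (Finset.sum_nonneg fun i _ => Complex.normSq_nonneg _)] using h2
    _ ≤ Real.sqrt (∑ i, Complex.normSq (w i)) * Real.sqrt (∑ i, Complex.normSq (v i)) :=
        mul_le_mul (Real.sqrt_le_sqrt haN) (Real.sqrt_le_sqrt hbN)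
          (Real.sqrt_nonneg _) (Real.sqrt_nonneg _)

lemma hadamard_bound (X Y S : Matrix (Fin n) (Fin n) ℂ)
    (hX : ∀ i, ∑ k, Complex.normSq (X k i) ≤ 1)
    (hY : ∀ i, ∑ k, Complex.normSq (Y k i) ≤ 1)
    (hS : ∀ v, ∑ i, Complex.normSq ((S *ᵥ v) i) ≤ ∑ i, Complex.normSq (v i))
    (v : Fin n → ℂ) :
    ∑ i, Complex.normSq (((Matrix.hadamard (Xᴴ * Y) S) *ᵥ v) i)
      ≤ ∑ i, Complex.normSq (v i) := by
  set M := Matrix.hadamard (Xᴴ * Y) S with hM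
  set t := ∑ i, Complex.normSq ((M *ᵥ v) i) with ht
  set s := ∑ i, Complex.normSq (v i) with hs
  have ht0 : 0 ≤ t := Finset.sum_nonneg fun i _ => Complex.normSq_nonneg _
  have hs0 : 0 ≤ s := Finset.sum_nonneg fun i _ => Complex.normSq_nonneg _
  have habs : ‖star (M *ᵥ v) ⬝ᵥ (M *ᵥ v)‖ = t := by
    rw [dot_self_eq, Complex.norm_real, Real.norm_eq_abs, abs_of_nonneg ht0]
  have hb := hadamard_bilinear X Y S hX hY hS (M *ᵥ v) v
  rw [habs] at hb
  nlinarith [Real.sq_sqrt ht0, Real.sq_sqrt hs0, Real.sqrt_nonneg t, Real.sqrt_nonneg s,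
    sq_nonneg (Real.sqrt t - Real.sqrt s)]

lemma le_of_sorted_top {f : Fin n → ℝ} (hn : 0 < n)
    (h : (f ∘ Tuple.sort f) (Fin.rev ⟨0, hn⟩) ≤ 1) (i : Fin n) : f i ≤ 1 := by
  have h1 : f i = (f ∘ Tuple.sort f) ((Tuple.sort f)⁻¹ i) := by simp
  rw [h1]
  refine le_trans (Tuple.monotone_sort f ?_) h
  rw [Fin.le_def]
  have := ((Tuple.sort f)⁻¹ i).isLt
  simp only [Fin.val_rev]
  omega

theorem hadamard_contraction_opNorm_le_one {n : ℕ} (hn : 0 < n)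
    (X Y S : Matrix (Fin n) (Fin n) ℂ)
    (hX : ∀ i, colNorm X i ≤ 1) (hY : ∀ i, colNorm Y i ≤ 1)
    (hS : singularValue S ⟨0, hn⟩ ≤ 1) :
    singularValue (Matrix.hadamard (Xᴴ * Y) S) ⟨0, hn⟩ ≤ 1 := by
  have hSe : ∀ i, (Matrix.isHermitian_conjTranspose_mul_self S).eigenvalues i ≤ 1 := by
    refine le_of_sorted_top hn ?_
    have h0 : 0 ≤ ((Matrix.isHermitian_conjTranspose_mul_self S).eigenvalues ∘
        Tuple.sort ((Matrix.isHermitian_conjTranspose_mul_self S).eigenvalues))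
        (Fin.rev ⟨0, hn⟩) :=
      Matrix.eigenvalues_conjTranspose_mul_self_nonneg S _
    unfold singularValue at hS
    nlinarith [Real.sq_sqrt h0, hS, Real.sqrt_nonneg
      (((Matrix.isHermitian_conjTranspose_mul_self S).eigenvalues ∘
        Tuple.sort ((Matrix.isHermitian_conjTranspose_mul_self S).eigenvalues))
        (Fin.rev ⟨0, hn⟩))]
  have hS' := bound_of_eig S hSe
  have hcol : ∀ (Z : Matrix (Fin n) (Fin n) ℂ), (∀ i, colNorm Z i ≤ 1) →
      ∀ i, ∑ k, Complex.normSq (Z k i) ≤ 1 := by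
    intro Z hZ i
    have h1 := hZ i
    unfold colNorm at h1
    have h0 : 0 ≤ ∑ k, ‖Z k i‖ ^ 2 :=
      Finset.sum_nonneg fun _ _ => sq_nonneg _
    have h2 : ∑ k, ‖Z k i‖ ^ 2 ≤ 1 := by
      nlinarith [Real.sq_sqrt h0, Real.sqrt_nonneg (∑ k, ‖Z k i‖ ^ 2)]
    calc ∑ k, Complex.normSq (Z k i) = ∑ k, ‖Z k i‖ ^ 2 :=
          Finset.sum_congr rfl fun k _ => (Complex.sq_norm _).symm
      _ ≤ 1 := h2
  have hM := hadamard_bound X Y S (hcol X hX) (hcol Y hY) hS'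
  have hMe := eig_le_of_bound _ hM
  unfold singularValue
  simp only [Function.comp_apply]
  calc Real.sqrt _ ≤ Real.sqrt 1 := Real.sqrt_le_sqrt (hMe _)
    _ = 1 := Real.sqrt_one
end

section
/- Let X and Y be n×n complex matrices such that every column of X and every column of Y has Euclidean norm exactly 1, and let Q = uv* be a rank-one partial isometry (u, v unit vectors in ℂ^n). Then the trace norm (sum of all singular values) of the Hadamard product (X*Y) ∘ Q is at most 1. -/
open Matrix Finset

private lemma colsum_eq {n : ℕ} (C D : Matrix (Fin n) (Fin n) ℂ) (i j : Fin n) :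
    ∑ k, star (C k i) * D k j = ((Cᴴ * D) i j) := by
  simp [mul_apply, conjTranspose_apply]

private lemma colsum_self {n : ℕ} (C : Matrix (Fin n) (Fin n) ℂ) (i : Fin n) :
    ∑ k, star (C k i) * C k i = ((∑ k, ‖C k i‖ ^ 2 : ℝ) : ℂ) := by
  push_cast
  refine Finset.sum_congr rfl fun k _ => ?_
  rw [← Complex.ofReal_pow, Complex.sq_norm, Complex.normSq_eq_conj_mul_self]; rfl

private lemma trace_frob {n : ℕ} (C : Matrix (Fin n) (Fin n) ℂ) :
    trace (Cᴴ * C) = ((∑ i, ∑ k, ‖C k i‖ ^ 2 : ℝ) : ℂ) := by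
  simp only [trace, diag_apply]
  push_cast
  refine Finset.sum_congr rfl fun i _ => ?_
  have := colsum_self C i
  rw [colsum_eq] at this
  rw [this]; push_cast; rfl

private lemma frob_nonneg {n : ℕ} (C : Matrix (Fin n) (Fin n) ℂ) :
    0 ≤ ∑ i, ∑ k, ‖C k i‖ ^ 2 := by positivity

/-- Frobenius norm does not increase after multiplying by a matrix `Z` with
`Z Zᴴ` an orthogonal projection. -/
private lemma frob_mul_proj_le {n : ℕ} (A Z : Matrix (Fin n) (Fin n) ℂ)
    (hPP : (Z * Zᴴ) * (Z * Zᴴ) = Z * Zᴴ) :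
    ∑ i, ∑ k, ‖(A * Z) k i‖ ^ 2 ≤ ∑ i, ∑ k, ‖A k i‖ ^ 2 := by
  set P : Matrix (Fin n) (Fin n) ℂ := Z * Zᴴ with hPdef
  have hPH : Pᴴ = P := by simp [hPdef, conjTranspose_mul]
  have h1 : trace ((A * Z)ᴴ * (A * Z)) = trace ((Aᴴ * A) * P) := by
    calc trace ((A * Z)ᴴ * (A * Z)) = trace (Zᴴ * (Aᴴ * (A * Z))) := by
          rw [conjTranspose_mul, mul_assoc]
      _ = trace ((Aᴴ * (A * Z)) * Zᴴ) := trace_mul_comm _ _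
      _ = trace ((Aᴴ * A) * P) := by rw [hPdef]; simp only [Matrix.mul_assoc]
  have h2 : trace ((A - A * P)ᴴ * (A - A * P))
      = trace (Aᴴ * A) - trace ((Aᴴ * A) * P) := by
    have e1 : trace (Aᴴ * (A * P)) = trace ((Aᴴ * A) * P) := by rw [mul_assoc]
    have e2 : trace ((A * P)ᴴ * A) = trace ((Aᴴ * A) * P) := by
      rw [conjTranspose_mul, hPH, mul_assoc, trace_mul_comm]
    have e3 : trace ((A * P)ᴴ * (A * P)) = trace ((Aᴴ * A) * P) := by
      rw [conjTranspose_mul, hPH, mul_assoc, trace_mul_comm]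
      simp only [Matrix.mul_assoc]
      rw [hPP]
    simp only [conjTranspose_sub, sub_mul, mul_sub, trace_sub]
    rw [e1, e2, e3]
    ring
  have hA := trace_frob A
  have hAZ := trace_frob (A * Z)
  have hAP := trace_frob (A - A * P)
  rw [h2] at hAP
  rw [h1] at hAZ
  have key : ((∑ i, ∑ k, ‖(A - A * P) k i‖ ^ 2 : ℝ) : ℂ)
      = ((∑ i, ∑ k, ‖A k i‖ ^ 2 : ℝ) : ℂ)
        - ((∑ i, ∑ k, ‖(A * Z) k i‖ ^ 2 : ℝ) : ℂ) := by
    rw [← hA, ← hAZ, ← hAP]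
  have key' : (∑ i, ∑ k, ‖(A - A * P) k i‖ ^ 2 : ℝ)
      = (∑ i, ∑ k, ‖A k i‖ ^ 2) - ∑ i, ∑ k, ‖(A * Z) k i‖ ^ 2 := by
    exact_mod_cast key
  have := frob_nonneg (A - A * P)
  linarith


private lemma traceNorm_core {n : ℕ} (A B : Matrix (Fin n) (Fin n) ℂ) :
    ∑ i, Real.sqrt ((Matrix.isHermitian_conjTranspose_mul_self (Aᴴ * B)).eigenvalues i)
      ≤ Real.sqrt (∑ i, ∑ k, ‖A k i‖ ^ 2) *
        Real.sqrt (∑ i, ∑ k, ‖B k i‖ ^ 2) := by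
  set M : Matrix (Fin n) (Fin n) ℂ := Aᴴ * B with hM
  set hH := Matrix.isHermitian_conjTranspose_mul_self M with hHdef
  set lam : Fin n → ℝ := hH.eigenvalues with hlam
  set V : Matrix (Fin n) (Fin n) ℂ := (hH.eigenvectorUnitary : Matrix (Fin n) (Fin n) ℂ) with hV
  have hVV : V * Vᴴ = 1 := Matrix.mem_unitaryGroup_iff.mp (hH.eigenvectorUnitary).2
  set N : Matrix (Fin n) (Fin n) ℂ := M * V with hN
  have hlam0 : ∀ i, 0 ≤ lam i :=
    fun i => Matrix.eigenvalues_conjTranspose_mul_self_nonneg M i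
  have hNN : Nᴴ * N = diagonal (fun i => ((lam i : ℝ) : ℂ)) := by
    have h0 : star V * (Mᴴ * M) * V = diagonal (fun i => ((lam i : ℝ) : ℂ)) := by
      have := hH.conjStarAlgAut_star_eigenvectorUnitary
      rw [Unitary.conjStarAlgAut_apply] at this
      simpa [Function.comp_def] using this
    rw [star_eq_conjTranspose] at h0
    calc Nᴴ * N = Vᴴ * (Mᴴ * M) * V := by
          rw [hN, conjTranspose_mul]; simp only [Matrix.mul_assoc]
      _ = diagonal (fun i => ((lam i : ℝ) : ℂ)) := h0
  have hNNe : ∀ i j, ∑ k, star (N k i) * N k j = diagonal (fun i => ((lam i : ℝ) : ℂ)) i j :=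
    fun i j => by rw [colsum_eq, hNN]
  have hcol : ∀ i, ∑ k, ‖N k i‖ ^ 2 = lam i := by
    intro i
    have h : ((∑ k, ‖N k i‖ ^ 2 : ℝ) : ℂ) = ((lam i : ℝ) : ℂ) := by
      rw [← colsum_self, hNNe i i, diagonal_apply_eq]
    exact_mod_cast h
  have hzero : ∀ i, lam i = 0 → ∀ k, N k i = 0 := by
    intro i h0 k
    have hk := (Finset.sum_eq_zero_iff_of_nonneg
      (fun k _ => sq_nonneg (‖N k i‖))).mp (by rw [hcol i, h0]) k (mem_univ k)
    have := pow_eq_zero_iff (n := 2) (by norm_num) |>.mp hk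
    simpa using this
  set s : Fin n → ℝ := fun i => Real.sqrt (lam i) with hs
  set Z : Matrix (Fin n) (Fin n) ℂ := Matrix.of (fun k i => N k i / (s i : ℂ)) with hZ
  have hZapp : ∀ k i, Z k i = N k i / (s i : ℂ) := fun k i => rfl
  have hZ0 : ∀ i, lam i = 0 → ∀ k, Z k i = 0 := by
    intro i h0 k
    rw [hZapp, hzero i h0 k, zero_div]
  have hZsum : ∀ i j, ∑ k, star (Z k i) * Z k j
      = (∑ k, star (N k i) * N k j) / ((s i : ℂ) * (s j : ℂ)) := by
    intro i j
    rw [Finset.sum_div]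
    refine Finset.sum_congr rfl fun k _ => ?_
    rw [hZapp, hZapp, star_div₀, div_mul_div_comm]
    simp [Complex.star_def, Complex.conj_ofReal]
  have hZZ : Zᴴ * Z = diagonal (fun i => if lam i = 0 then (0 : ℂ) else 1) := by
    ext i j
    rw [← colsum_eq, hZsum i j]
    by_cases hij : i = j
    · subst hij
      rw [diagonal_apply_eq, hNNe i i, diagonal_apply_eq]
      by_cases h0 : lam i = 0
      · simp [h0]
      · have hsne : s i ≠ 0 := Real.sqrt_ne_zero'.mpr (lt_of_le_of_ne (hlam0 i) (Ne.symm h0))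
        have : ((s i : ℝ) : ℂ) * ((s i : ℝ) : ℂ) = ((lam i : ℝ) : ℂ) := by
          rw [← Complex.ofReal_mul, Real.mul_self_sqrt (hlam0 i)]
        rw [if_neg h0, this, div_self (Complex.ofReal_ne_zero.mpr (by
          rw [← Real.mul_self_sqrt (hlam0 i)]; exact mul_ne_zero hsne hsne))]
    · rw [diagonal_apply_ne _ hij, hNNe i j, diagonal_apply_ne _ hij, zero_div]
  have hZD : Z * diagonal (fun i => if lam i = 0 then (0 : ℂ) else 1) = Z := by
    ext k i
    rw [mul_diagonal]
    by_cases h0 : lam i = 0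
    · rw [if_pos h0, mul_zero, hZ0 i h0 k]
    · rw [if_neg h0, mul_one]
  have hPP : (Z * Zᴴ) * (Z * Zᴴ) = Z * Zᴴ := by
    calc (Z * Zᴴ) * (Z * Zᴴ) = (Z * (Zᴴ * Z)) * Zᴴ := by simp only [Matrix.mul_assoc]
      _ = Z * Zᴴ := by rw [hZZ, hZD]
  have hVPP : (V * Vᴴ) * (V * Vᴴ) = V * Vᴴ := by rw [hVV, one_mul]
  have hZN : ∀ i, ∑ k, star (Z k i) * N k i = ((s i : ℝ) : ℂ) := by
    intro i
    by_cases h0 : lam i = 0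
    · have : s i = 0 := by rw [hs]; simp [h0]
      simp [hZ0 i h0, this]
    · have hsne : s i ≠ 0 := Real.sqrt_ne_zero'.mpr (lt_of_le_of_ne (hlam0 i) (Ne.symm h0))
      have hsC : ((s i : ℝ) : ℂ) ≠ 0 := Complex.ofReal_ne_zero.mpr hsne
      have step : ∑ k, star (Z k i) * N k i = (∑ k, star (N k i) * N k i) / ((s i : ℝ) : ℂ) := by
        rw [Finset.sum_div]
        refine Finset.sum_congr rfl fun k _ => ?_
        rw [hZapp, star_div₀, div_mul_eq_mul_div]
        congr 1
        simp [Complex.star_def, Complex.conj_ofReal]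
      rw [step, hNNe i i, diagonal_apply_eq, div_eq_iff hsC, ← Complex.ofReal_mul,
        Real.mul_self_sqrt (hlam0 i)]
  have hdiag : ∀ i, ((A * Z)ᴴ * (B * V)) i i = ((s i : ℝ) : ℂ) := by
    intro i
    have hMat : (A * Z)ᴴ * (B * V) = Zᴴ * N := by
      rw [conjTranspose_mul, hN, hM]
      simp only [Matrix.mul_assoc]
    rw [hMat, ← colsum_eq, hZN i]
  have step1 : ∀ i, Real.sqrt (lam i)
      ≤ Real.sqrt (∑ k, ‖(A * Z) k i‖ ^ 2) *
        Real.sqrt (∑ k, ‖(B * V) k i‖ ^ 2) := by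
    intro i
    have h1 : Real.sqrt (lam i) = ‖((A * Z)ᴴ * (B * V)) i i‖ := by
      rw [hdiag i, Complex.norm_real, Real.norm_eq_abs, abs_of_nonneg (Real.sqrt_nonneg _)]
    rw [h1, ← colsum_eq]
    calc ‖∑ k, star ((A * Z) k i) * (B * V) k i‖
        ≤ ∑ k, ‖(A * Z) k i‖ * ‖(B * V) k i‖ := by
          refine (norm_sum_le _ _).trans ?_
          refine le_of_eq (Finset.sum_congr rfl fun k _ => ?_)
          rw [norm_mul]
          congr 1
          exact norm_star _
      _ ≤ _ := Real.sum_mul_le_sqrt_mul_sqrt _ _ _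
  calc ∑ i, Real.sqrt (lam i)
      ≤ ∑ i, Real.sqrt (∑ k, ‖(A * Z) k i‖ ^ 2) *
          Real.sqrt (∑ k, ‖(B * V) k i‖ ^ 2) :=
        Finset.sum_le_sum fun i _ => step1 i
    _ ≤ Real.sqrt (∑ i, ∑ k, ‖(A * Z) k i‖ ^ 2) *
          Real.sqrt (∑ i, ∑ k, ‖(B * V) k i‖ ^ 2) := by
        have := Real.sum_mul_le_sqrt_mul_sqrt Finset.univ
          (fun i => Real.sqrt (∑ k, ‖(A * Z) k i‖ ^ 2))
          (fun i => Real.sqrt (∑ k, ‖(B * V) k i‖ ^ 2))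
        simpa [Real.sq_sqrt (Finset.sum_nonneg fun k _ => sq_nonneg _)] using this
    _ ≤ Real.sqrt (∑ i, ∑ k, ‖A k i‖ ^ 2) *
          Real.sqrt (∑ i, ∑ k, ‖B k i‖ ^ 2) := by
        exact mul_le_mul (Real.sqrt_le_sqrt (frob_mul_proj_le A Z hPP))
          (Real.sqrt_le_sqrt (frob_mul_proj_le B V hVPP))
          (Real.sqrt_nonneg _) (Real.sqrt_nonneg _)


theorem hadamard_rankOne_traceNorm_le_one {n : ℕ}
    (X Y : Matrix (Fin n) (Fin n) ℂ) (u v : Fin n → ℂ)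
    (hX : ∀ i, colNorm X i = 1) (hY : ∀ i, colNorm Y i = 1)
    (hu : ∑ i, ‖u i‖ ^ 2 = 1) (hv : ∑ i, ‖v i‖ ^ 2 = 1) :
    ∑ i, singularValue
        (Matrix.hadamard (Xᴴ * Y) (Matrix.of fun i j => u i * star (v j))) i ≤ 1 := by
  set A : Matrix (Fin n) (Fin n) ℂ := X * diagonal (fun i => star (u i)) with hA
  set B : Matrix (Fin n) (Fin n) ℂ := Y * diagonal (fun i => star (v i)) with hB
  have hMeq : Matrix.hadamard (Xᴴ * Y) (Matrix.of fun i j => u i * star (v j)) = Aᴴ * B := by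
    have hAe : ∀ k i, A k i = X k i * star (u i) := fun k i => by rw [hA, mul_diagonal]
    have hBe : ∀ k i, B k i = Y k i * star (v i) := fun k i => by rw [hB, mul_diagonal]
    ext i j
    rw [Matrix.hadamard_apply, Matrix.of_apply, ← colsum_eq A B i j, ← colsum_eq X Y i j,
      Finset.sum_mul]
    refine Finset.sum_congr rfl fun k _ => ?_
    rw [hAe, hBe, star_mul', star_star]
    ring
  rw [hMeq]
  -- get rid of the sorting permutation
  have hsort : ∑ i, singularValue (Aᴴ * B) i
      = ∑ i, Real.sqrt ((Matrix.isHermitian_conjTranspose_mul_self (Aᴴ * B)).eigenvalues i) := by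
    unfold singularValue
    exact Equiv.sum_comp (Fin.revPerm.trans
      (Tuple.sort (Matrix.isHermitian_conjTranspose_mul_self (Aᴴ * B)).eigenvalues))
      (fun j => Real.sqrt ((Matrix.isHermitian_conjTranspose_mul_self (Aᴴ * B)).eigenvalues j))
  rw [hsort]
  -- Frobenius norms of A and B equal 1
  have hcolX : ∀ i, ∑ k, ‖X k i‖ ^ 2 = 1 := by
    intro i
    have := hX i
    rw [colNorm] at this
    have h2 := congrArg (fun x : ℝ => x ^ 2) this
    simpa [Real.sq_sqrt (Finset.sum_nonneg fun k _ => sq_nonneg _)] using h2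
  have hcolY : ∀ i, ∑ k, ‖Y k i‖ ^ 2 = 1 := by
    intro i
    have := hY i
    rw [colNorm] at this
    have h2 := congrArg (fun x : ℝ => x ^ 2) this
    simpa [Real.sq_sqrt (Finset.sum_nonneg fun k _ => sq_nonneg _)] using h2
  have hfA : ∑ i, ∑ k, ‖A k i‖ ^ 2 = 1 := by
    calc ∑ i, ∑ k, ‖A k i‖ ^ 2
        = ∑ i, (∑ k, ‖X k i‖ ^ 2) * ‖u i‖ ^ 2 := by
          refine Finset.sum_congr rfl fun i _ => ?_
          rw [Finset.sum_mul]
          refine Finset.sum_congr rfl fun k _ => ?_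
          rw [hA, mul_diagonal, norm_mul, mul_pow]
          congr 2
          simp [Complex.star_def]
      _ = 1 := by
          rw [show (1 : ℝ) = ∑ i, ‖u i‖ ^ 2 from hu.symm]
          refine Finset.sum_congr rfl fun i _ => ?_
          rw [hcolX i, one_mul]
  have hfB : ∑ i, ∑ k, ‖B k i‖ ^ 2 = 1 := by
    calc ∑ i, ∑ k, ‖B k i‖ ^ 2
        = ∑ i, (∑ k, ‖Y k i‖ ^ 2) * ‖v i‖ ^ 2 := by
          refine Finset.sum_congr rfl fun i _ => ?_
          rw [Finset.sum_mul]
          refine Finset.sum_congr rfl fun k _ => ?_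
          rw [hB, mul_diagonal, norm_mul, mul_pow]
          congr 2
          simp [Complex.star_def]
      _ = 1 := by
          rw [show (1 : ℝ) = ∑ i, ‖v i‖ ^ 2 from hv.symm]
          refine Finset.sum_congr rfl fun i _ => ?_
          rw [hcolY i, one_mul]
  have := traceNorm_core A B
  rw [hfA, hfB, Real.sqrt_one, one_mul] at this
  exact this
end

section
/- For x ∈ ℝ^n and a weight w with w_1 ≥ ... ≥ w_k > 0, the dual norm of the weighted k-norm ‖x‖ = Σ_{i=1}^k w_i |x_i|↓ (where |x_i|↓ are the decreasingly ordered absolute values of the entries of x) is given by the maximum over j of ‖x‖_(j)/(w_1+...+w_j) for j = 1,...,k−1, together with ‖x‖_(n)/(w_1+...+w_k), where ‖x‖_(j) denotes the sum of the j largest absolute values of entries of x. -/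
open Matrix Finset

/-- The `i`-th largest absolute value of the entries of `x`. -/
noncomputable def absSorted {n : ℕ} (x : Fin n → ℝ) (i : Fin n) : ℝ :=
  ((fun j => |x j|) ∘ Tuple.sort (fun j => |x j|)) i.rev

/-- `‖x‖_(j)`: the sum of the `j` largest absolute values of entries of `x`. -/
noncomputable def kNorm {n : ℕ} (j : ℕ) (x : Fin n → ℝ) : ℝ :=
  ∑ i ∈ Finset.univ.filter (fun i : Fin n => (i : ℕ) < j), absSorted x i

/-- The weighted `k`-norm `Σ_{i=1}^k w_i |x_i|↓`. -/
noncomputable def wkNorm {n : ℕ} (w : Fin n → ℝ) (k : ℕ) (x : Fin n → ℝ) : ℝ :=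
  ∑ i ∈ Finset.univ.filter (fun i : Fin n => (i : ℕ) < k), w i * absSorted x i

/-! ### Auxiliary lemmas -/

/-- The sorting permutation. -/
noncomputable def sPerm {n : ℕ} (x : Fin n → ℝ) : Equiv.Perm (Fin n) :=
  (Fin.revPerm).trans (Tuple.sort (fun j => |x j|))

lemma absSorted_eq {n : ℕ} (x : Fin n → ℝ) (i : Fin n) :
    absSorted x i = |x (sPerm x i)| := rfl

lemma absSorted_antitone {n : ℕ} (x : Fin n → ℝ) : Antitone (absSorted x) := by
  intro i j hij
  exact Tuple.monotone_sort (fun j => |x j|) (Fin.rev_le_rev.mpr hij)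

lemma absSorted_nonneg {n : ℕ} (x : Fin n → ℝ) (i : Fin n) : 0 ≤ absSorted x i :=
  abs_nonneg _

lemma antitone_monovary' {α : Type*} [LinearOrder α] {f g : α → ℝ}
    (hf : Antitone f) (hg : Antitone g) : Monovary f g := by
  intro i j h
  rcases le_or_gt i j with hij | hij
  · exact absurd (hg hij) (not_le.mpr h)
  · exact hf hij.le

lemma rearrange {n : ℕ} (x y : Fin n → ℝ) :
    ∑ i, x i * y i ≤ ∑ i, absSorted x i * absSorted y i := by
  have h1 : ∑ i, x i * y i ≤ ∑ i, |x i| * |y i| := by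
    apply Finset.sum_le_sum
    intro i _
    calc x i * y i ≤ |x i * y i| := le_abs_self _
    _ = |x i| * |y i| := abs_mul _ _
  have h2 : ∑ i, |x i| * |y i| = ∑ i, |x (sPerm x i)| * |y (sPerm x i)| :=
    (Equiv.sum_comp (sPerm x) (fun t => |x t| * |y t|)).symm
  have h3 : ∀ i, |y (sPerm x i)| = absSorted y (((sPerm x).trans (sPerm y).symm) i) := by
    intro i
    rw [absSorted_eq]
    simp
  have h4 : ∑ i, |x (sPerm x i)| * |y (sPerm x i)|
      = ∑ i, absSorted x i * absSorted y (((sPerm x).trans (sPerm y).symm) i) := by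
    apply Finset.sum_congr rfl
    intro i _
    rw [absSorted_eq, h3]
  refine (h1.trans_eq (h2.trans h4)).trans ?_
  exact (antitone_monovary' (absSorted_antitone x)
    (absSorted_antitone y)).sum_mul_comp_perm_le_sum_mul

lemma abel_id (a c : ℕ → ℝ) (n : ℕ) :
    ∑ j ∈ range n, (a j - a (j+1)) * c (j+1)
      = (∑ j ∈ range n, a j * (c (j+1) - c j)) + a 0 * c 0 - a n * c n := by
  induction n with
  | zero => simp
  | succ m ih => rw [Finset.sum_range_succ, Finset.sum_range_succ, ih]; ring

lemma core (n k : ℕ) (hkn : k ≤ n) (a b w : ℕ → ℝ) (M : ℝ)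
    (ha : Antitone a) (han : a n = 0)
    (hb : ∀ i, 0 ≤ b i)
    (hM1 : ∀ j, j < k → ∑ i ∈ range j, b i ≤ M * ∑ i ∈ range j, w i)
    (hM2 : ∑ i ∈ range n, b i ≤ M * ∑ i ∈ range k, w i) :
    ∑ i ∈ range n, a i * b i ≤ M * ∑ i ∈ range k, w i * a i := by
  set A : ℕ → ℝ := fun j => ∑ i ∈ range j, b i with hA
  set C : ℕ → ℝ := fun j => M * ∑ i ∈ range (min j k), w i with hC
  have hAC : ∀ j, j ≤ n → A j ≤ C j := by
    intro j hj
    rcases lt_or_ge j k with h | h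
    · rw [hC]; simp only [min_eq_left h.le]; exact hM1 j h
    · have h1 : A j ≤ A n := by
        apply Finset.sum_le_sum_of_subset_of_nonneg (Finset.range_subset_range.mpr hj)
        intro i _ _; exact hb i
      rw [hC]; simp only [min_eq_right h]
      exact h1.trans hM2
  have step1 : ∑ i ∈ range n, a i * b i = ∑ j ∈ range n, (a j - a (j+1)) * A (j+1) := by
    rw [abel_id a A n, han]
    simp only [hA, Finset.range_zero, Finset.sum_empty, mul_zero, zero_mul, add_zero, sub_zero]
    apply Finset.sum_congr rfl
    intro j _
    rw [Finset.sum_range_succ]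
    ring
  have step2 : ∑ j ∈ range n, (a j - a (j+1)) * A (j+1)
      ≤ ∑ j ∈ range n, (a j - a (j+1)) * C (j+1) := by
    apply Finset.sum_le_sum
    intro j hj
    have h1 : 0 ≤ a j - a (j+1) := sub_nonneg.mpr (ha (Nat.le_succ j))
    exact mul_le_mul_of_nonneg_left (hAC (j+1) (Finset.mem_range.mp hj)) h1
  have hCd : ∀ j, C (j+1) - C j = if j < k then M * w j else 0 := by
    intro j
    rcases lt_or_ge j k with h | h
    · rw [if_pos h, hC]
      simp only [min_eq_left h.le, min_eq_left (Nat.succ_le_of_lt h), Finset.sum_range_succ]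
      ring
    · rw [if_neg (not_lt.mpr h), hC]
      simp only [min_eq_right h, min_eq_right (h.trans (Nat.le_succ j))]
      ring
  have step3 : ∑ j ∈ range n, (a j - a (j+1)) * C (j+1) = M * ∑ j ∈ range k, w j * a j := by
    rw [abel_id a C n, han]
    have hC0 : C 0 = 0 := by simp [hC]
    rw [hC0]
    simp only [mul_zero, zero_mul, add_zero, sub_zero]
    rw [Finset.mul_sum]
    rw [← Finset.sum_subset (Finset.range_subset_range.mpr hkn)]
    · apply Finset.sum_congr rfl
      intro j hj
      rw [hCd j, if_pos (Finset.mem_range.mp hj)]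
      ring
    · intro j _ hj
      rw [hCd j, if_neg (by simpa using hj)]
      ring
  calc ∑ i ∈ range n, a i * b i = _ := step1
    _ ≤ _ := step2
    _ = _ := step3

noncomputable def ext' (n : ℕ) (f : Fin n → ℝ) : ℕ → ℝ :=
  fun i => if h : i < n then f ⟨i, h⟩ else 0

lemma sum_filter_lt (n : ℕ) (f : Fin n → ℝ) (j : ℕ) (hj : j ≤ n) :
    ∑ i ∈ Finset.univ.filter (fun i : Fin n => (i : ℕ) < j), f i
      = ∑ i ∈ range j, ext' n f i := by
  rw [Finset.sum_filter]
  have h1 : ∀ i : Fin n, (if (i : ℕ) < j then f i else 0)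
      = (fun m => if m < j then ext' n f m else 0) ((i : ℕ)) := by
    intro i
    simp only [ext', i.isLt, dif_pos, Fin.eta]
  rw [Finset.sum_congr rfl (fun i _ => h1 i),
    Fin.sum_univ_eq_sum_range (fun m => if m < j then ext' n f m else 0) n]
  rw [← Finset.sum_filter]
  congr 1
  ext a
  simp only [Finset.mem_filter, Finset.mem_range]
  omega

lemma sum_univ_ext (n : ℕ) (f : Fin n → ℝ) :
    ∑ i, f i = ∑ i ∈ range n, ext' n f i := by
  rw [← sum_filter_lt n f n le_rfl]
  apply Finset.sum_congr
  · rw [Finset.filter_true_of_mem]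
    intro i _
    exact i.isLt
  · intros; rfl

lemma ext'_antitone (n : ℕ) (f : Fin n → ℝ) (hf : Antitone f) (hf0 : ∀ i, 0 ≤ f i) :
    Antitone (ext' n f) := by
  intro i j hij
  unfold ext'
  by_cases hj : j < n
  · rw [dif_pos hj, dif_pos (lt_of_le_of_lt hij hj)]
    exact hf (by exact_mod_cast hij)
  · rw [dif_neg hj]
    split
    · exact hf0 _
    · exact le_refl 0

lemma card_filter_perm {n : ℕ} (σ : Equiv.Perm (Fin n)) (p : Fin n → Prop) [DecidablePred p] :
    (Finset.univ.filter (fun i => p (σ i))).card = (Finset.univ.filter p).card := by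
  apply Finset.card_bij (fun i _ => σ i)
  · intro a ha
    simp only [Finset.mem_filter, Finset.mem_univ, true_and] at ha ⊢
    exact ha
  · intro a _ b _ h
    exact σ.injective h
  · intro b hb
    simp only [Finset.mem_filter, Finset.mem_univ, true_and] at hb
    exact ⟨σ.symm b, by simpa using hb, by simp⟩

lemma absSorted_eq_zero {n : ℕ} (x : Fin n → ℝ) (m : ℕ)
    (hcard : (Finset.univ.filter (fun t => x t ≠ 0)).card ≤ m) (i : Fin n)
    (hi : m ≤ (i : ℕ)) : absSorted x i = 0 := by
  by_contra h
  have hsub : Finset.Iic i ⊆ Finset.univ.filter (fun i' => absSorted x i' ≠ 0) := by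
    intro i' hi'
    simp only [Finset.mem_filter, Finset.mem_univ, true_and]
    intro h0
    apply h
    have := absSorted_antitone x (Finset.mem_Iic.mp hi')
    have h2 := absSorted_nonneg x i
    rw [h0] at this
    linarith
  have hcard2 : (Finset.univ.filter (fun i' => absSorted x i' ≠ 0)).card
      = (Finset.univ.filter (fun t => x t ≠ 0)).card := by
    have heq : (Finset.univ.filter (fun i' => absSorted x i' ≠ 0))
        = (Finset.univ.filter (fun i' => x (sPerm x i') ≠ 0)) := by
      apply Finset.filter_congr
      intro i' _
      rw [absSorted_eq]
      simp [abs_ne_zero]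
    rw [heq]
    exact card_filter_perm (sPerm x) (fun t => x t ≠ 0)
  have h3 := Finset.card_le_card hsub
  rw [Fin.card_Iic, hcard2] at h3
  omega

lemma absSorted_le {n : ℕ} (x : Fin n → ℝ) (c : ℝ) (hc : ∀ t, |x t| ≤ c) (i : Fin n) :
    absSorted x i ≤ c := by
  rw [absSorted_eq]
  exact hc _

lemma exists_extremal {n : ℕ} (k : ℕ) (hk1 : 1 ≤ k) (hkn : k ≤ n) (w : Fin n → ℝ)
    (hwpos : ∀ i : Fin n, (i : ℕ) < k → 0 < w i) (y : Fin n → ℝ)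
    (j m : ℕ) (h1j : 1 ≤ j) (hjk : j ≤ k) (hmn : m ≤ n) (hkm : min k m ≤ j) :
    ∃ x : Fin n → ℝ, wkNorm w k x ≤ 1 ∧ ∑ i, x i * y i
      = kNorm m y / (∑ i ∈ Finset.univ.filter (fun i : Fin n => (i : ℕ) < j), w i) := by
  classical
  have hn : 0 < n := lt_of_lt_of_le hk1 hkn
  set W := ∑ i ∈ Finset.univ.filter (fun i : Fin n => (i : ℕ) < j), w i with hWdef
  have hW : 0 < W := by
    apply Finset.sum_pos
    · intro i hi
      exact hwpos i (lt_of_lt_of_le (Finset.mem_filter.mp hi).2 hjk)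
    · exact ⟨⟨0, hn⟩, by simp [Finset.mem_filter]; omega⟩
  have hsgn_mul : ∀ r : ℝ, (if 0 ≤ r then (1:ℝ) else -1) * r = |r| := by
    intro r
    split
    · rw [abs_of_nonneg (by assumption)]; ring
    · rw [abs_of_neg (by linarith [not_le.mp (by assumption : ¬ 0 ≤ r)])]; ring
  have hsgn_abs : ∀ r : ℝ, |if 0 ≤ r then (1:ℝ) else -1| = 1 := by
    intro r
    split <;> simp
  set τ := sPerm y with hτ
  set x : Fin n → ℝ := fun t => if ((τ.symm t : Fin n) : ℕ) < m then (if 0 ≤ y t then (1:ℝ) else -1) / W else 0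
    with hx
  refine ⟨x, ?_, ?_⟩
  · -- wkNorm w k x ≤ 1
    have habs_le : ∀ i, absSorted x i ≤ 1 / W := by
      apply absSorted_le
      intro t
      rw [hx]
      dsimp only
      split
      · rw [abs_div, hsgn_abs, abs_of_pos hW]
      · simp
        positivity
    have hcard : (Finset.univ.filter (fun t => x t ≠ 0)).card ≤ m := by
      have hsub : (Finset.univ.filter (fun t => x t ≠ 0))
          ⊆ (Finset.univ.filter (fun t => ((τ.symm t : Fin n) : ℕ) < m)) := by
        intro t ht
        simp only [Finset.mem_filter, Finset.mem_univ, true_and] at ht ⊢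
        by_contra hc
        apply ht
        rw [hx]
        simp only [if_neg hc]
      refine le_trans (Finset.card_le_card hsub) ?_
      rw [card_filter_perm τ.symm (fun t => ((t : Fin n) : ℕ) < m)]
      calc (Finset.univ.filter (fun t : Fin n => (t : ℕ) < m)).card
          ≤ (Finset.range m).card := by
            apply Finset.card_le_card_of_injOn Fin.val
            · intro t ht
              replace ht := Finset.mem_filter.mp (Finset.mem_coe.mp ht)
              exact Finset.mem_range.mpr ht.2
            · exact Fin.val_injective.injOn
        _ = m := Finset.card_range m
    have hzero : ∀ i : Fin n, m ≤ (i : ℕ) → absSorted x i = 0 :=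
      absSorted_eq_zero x m hcard
    have hterm : ∀ i ∈ Finset.univ.filter (fun i : Fin n => (i : ℕ) < k),
        w i * absSorted x i ≤ if (i : ℕ) < j then w i * (1 / W) else 0 := by
      intro i hi
      have hik : (i : ℕ) < k := (Finset.mem_filter.mp hi).2
      by_cases hij : (i : ℕ) < j
      · rw [if_pos hij]
        exact mul_le_mul_of_nonneg_left (habs_le i) (hwpos i hik).le
      · rw [if_neg hij]
        have hmi : m ≤ (i : ℕ) := by omega
        rw [hzero i hmi, mul_zero]
    calc wkNorm w k x ≤ ∑ i ∈ Finset.univ.filter (fun i : Fin n => (i : ℕ) < k),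
          if (i : ℕ) < j then w i * (1 / W) else 0 := Finset.sum_le_sum hterm
      _ = ∑ i ∈ Finset.univ.filter (fun i : Fin n => (i : ℕ) < j), w i * (1 / W) := by
          rw [Finset.sum_filter, Finset.sum_filter]
          apply Finset.sum_congr rfl
          intro i _
          by_cases hij : (i : ℕ) < j
          · simp [hij, lt_of_lt_of_le hij hjk]
          · simp [hij]
      _ = W * (1 / W) := by rw [← Finset.sum_mul]
      _ = 1 := by field_simp
  · -- the sum
    rw [← Equiv.sum_comp τ (fun t => x t * y t)]
    have hterm : ∀ i : Fin n, x (τ i) * y (τ i)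
        = if (i : ℕ) < m then absSorted y i / W else 0 := by
      intro i
      rw [hx]
      simp only [Equiv.symm_apply_apply]
      split
      · rw [div_mul_eq_mul_div, hsgn_mul, absSorted_eq, ← hτ]
      · ring
    rw [Finset.sum_congr rfl (fun i _ => hterm i), ← Finset.sum_filter, kNorm,
      Finset.sum_div]

theorem dual_of_weighted_kNorm {n : ℕ} (k : ℕ) (hk1 : 1 ≤ k) (hkn : k ≤ n)
    (w : Fin n → ℝ)
    (hw : ∀ i j : Fin n, i ≤ j → (j : ℕ) < k → w j ≤ w i)
    (hwpos : ∀ i : Fin n, (i : ℕ) < k → 0 < w i)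
    (y : Fin n → ℝ) :
    sSup {r : ℝ | ∃ x : Fin n → ℝ, wkNorm w k x ≤ 1 ∧ r = ∑ i, x i * y i} =
      sSup ({kNorm n y / ∑ i ∈ Finset.univ.filter (fun i : Fin n => (i : ℕ) < k), w i} ∪
        (fun j => kNorm j y /
            ∑ i ∈ Finset.univ.filter (fun i : Fin n => (i : ℕ) < j), w i) ''
          {j : ℕ | 1 ≤ j ∧ j < k}) := by
  classical
  have hn : 0 < n := lt_of_lt_of_le hk1 hkn
  set S : Set ℝ := {r : ℝ | ∃ x : Fin n → ℝ, wkNorm w k x ≤ 1 ∧ r = ∑ i, x i * y i} with hS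
  set T : Set ℝ :=
    ({kNorm n y / ∑ i ∈ Finset.univ.filter (fun i : Fin n => (i : ℕ) < k), w i} ∪
      (fun j => kNorm j y /
          ∑ i ∈ Finset.univ.filter (fun i : Fin n => (i : ℕ) < j), w i) ''
        {j : ℕ | 1 ≤ j ∧ j < k}) with hT
  have hWpos : ∀ j : ℕ, 1 ≤ j → j ≤ k →
      0 < ∑ i ∈ Finset.univ.filter (fun i : Fin n => (i : ℕ) < j), w i := by
    intro j h1 h2
    apply Finset.sum_pos
    · intro i hi
      exact hwpos i (lt_of_lt_of_le (Finset.mem_filter.mp hi).2 h2)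
    · exact ⟨⟨0, hn⟩, by simp [Finset.mem_filter]; omega⟩
  have hkNnonneg : ∀ j : ℕ, 0 ≤ kNorm j y := by
    intro j
    apply Finset.sum_nonneg
    intro i _
    exact absSorted_nonneg y i
  have hTfin : T.Finite := by
    rw [hT]
    apply Set.Finite.union (Set.finite_singleton _)
    apply Set.Finite.image
    exact Set.Finite.subset (Set.finite_Iio k) (fun j hj => hj.2)
  have hTne : T.Nonempty := ⟨_, Or.inl rfl⟩
  have hMmem : sSup T ∈ T := hTne.csSup_mem hTfin
  have hMub : ∀ r ∈ T, r ≤ sSup T := fun r hr => le_csSup hTfin.bddAbove hr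
  have hM0 : 0 ≤ sSup T := by
    refine le_trans ?_ (hMub _ (Or.inl rfl))
    exact div_nonneg (hkNnonneg n) (hWpos k hk1 le_rfl).le
  have hG : IsGreatest S (sSup T) := by
    constructor
    · -- membership
      rcases hMmem with h | ⟨j, ⟨h1j, hjk⟩, hv⟩
      · rw [Set.mem_singleton_iff] at h
        obtain ⟨x, hx1, hx2⟩ := exists_extremal k hk1 hkn w hwpos y k n hk1 le_rfl le_rfl
          (by omega)
        exact ⟨x, hx1, by rw [h, ← hx2]⟩
      · obtain ⟨x, hx1, hx2⟩ := exists_extremal k hk1 hkn w hwpos y j j h1j hjk.le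
          (le_trans hjk.le hkn) (by omega)
        exact ⟨x, hx1, by rw [← hv]; exact hx2.symm⟩
    · -- upper bound
      intro r hr
      obtain ⟨x, hx1, rfl⟩ := hr
      have h1 : ∑ i, x i * y i ≤ ∑ i, absSorted x i * absSorted y i := rearrange x y
      have h2 : ∑ i, absSorted x i * absSorted y i
          = ∑ i ∈ range n, ext' n (absSorted x) i * ext' n (absSorted y) i := by
        rw [sum_univ_ext n (fun i => absSorted x i * absSorted y i)]
        apply Finset.sum_congr rfl
        intro i hi
        have hin : i < n := Finset.mem_range.mp hi
        simp only [ext', dif_pos hin]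
      have h3 : ∑ i ∈ range n, ext' n (absSorted x) i * ext' n (absSorted y) i
          ≤ sSup T * ∑ i ∈ range k, ext' n w i * ext' n (absSorted x) i := by
        apply core n k hkn _ _ _ _
        · exact ext'_antitone n (absSorted x) (absSorted_antitone x) (absSorted_nonneg x)
        · simp [ext']
        · intro i
          simp only [ext']
          split
          · exact absSorted_nonneg y _
          · exact le_refl 0
        · intro j hjk
          rcases Nat.eq_zero_or_pos j with rfl | h1j
          · simp
          · rw [← sum_filter_lt n (absSorted y) j (le_trans hjk.le hkn),
              ← sum_filter_lt n w j (le_trans hjk.le hkn)]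
            have hmem : kNorm j y /
                (∑ i ∈ Finset.univ.filter (fun i : Fin n => (i : ℕ) < j), w i) ∈ T := by
              rw [hT]
              exact Or.inr ⟨j, ⟨h1j, hjk⟩, rfl⟩
            have := hMub _ hmem
            rw [div_le_iff₀ (hWpos j h1j hjk.le)] at this
            exact this
        · rw [← sum_filter_lt n (absSorted y) n le_rfl, ← sum_filter_lt n w k hkn]
          have hmem : kNorm n y /
              (∑ i ∈ Finset.univ.filter (fun i : Fin n => (i : ℕ) < k), w i) ∈ T := by
            rw [hT]; exact Or.inl rfl
          have h4 := hMub _ hmem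
          rw [div_le_iff₀ (hWpos k hk1 le_rfl)] at h4
          have h5 : kNorm n y
              = ∑ i ∈ Finset.univ.filter (fun i : Fin n => (i : ℕ) < n), absSorted y i := rfl
          rw [← h5]
          exact h4
      have h4 : ∑ i ∈ range k, ext' n w i * ext' n (absSorted x) i = wkNorm w k x := by
        rw [wkNorm, sum_filter_lt n (fun i => w i * absSorted x i) k hkn]
        apply Finset.sum_congr rfl
        intro i hi
        have hik : i < k := Finset.mem_range.mp hi
        have hin : i < n := lt_of_lt_of_le hik hkn
        simp only [ext', dif_pos hin]
      calc ∑ i, x i * y i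
          ≤ ∑ i ∈ range n, ext' n (absSorted x) i * ext' n (absSorted y) i := h1.trans_eq h2
        _ ≤ sSup T * ∑ i ∈ range k, ext' n w i * ext' n (absSorted x) i := h3
        _ = sSup T * wkNorm w k x := by rw [h4]
        _ ≤ sSup T * 1 := mul_le_mul_of_nonneg_left hx1 hM0
        _ = sSup T := mul_one _
  exact hG.csSup_eq
end

section
/- For x ∈ ℝ^n and 1 ≤ k ≤ n, the dual norm of the k-norm ‖x‖_(k) = sum of the k largest absolute values of entries of x is equal to max(‖x‖_∞, ‖x‖_1 / k). -/
open Matrix Finset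

lemma card_filter_lt' {n : ℕ} (k : ℕ) (hkn : k ≤ n) :
    (Finset.univ.filter fun i : Fin n => (i : ℕ) < k).card = k := by
  have : (Finset.univ.filter fun i : Fin n => (i : ℕ) < k)
      = Finset.map (Fin.castLEEmb hkn) Finset.univ := by
    ext i
    simp only [mem_filter, mem_univ, true_and, Finset.mem_map]
    constructor
    · intro h; exact ⟨⟨i, h⟩, by simp [Fin.ext_iff]⟩
    · rintro ⟨m, rfl⟩; simp [m.isLt]
  rw [this, Finset.card_map, Finset.card_univ, Fintype.card_fin]

lemma kNorm_structure {n : ℕ} (k : ℕ) (hkn : k ≤ n) (x : Fin n → ℝ) :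
    ∃ T : Finset (Fin n), T.card = k ∧ kNorm k x = ∑ j ∈ T, |x j| ∧
      ∀ j ∉ T, ∀ j' ∈ T, |x j| ≤ |x j'| := by
  classical
  set σ := Tuple.sort (fun j : Fin n => |x j|) with hσ
  set F := Finset.univ.filter fun i : Fin n => (i : ℕ) < k with hF
  have hinj : ∀ i ∈ F, ∀ i' ∈ F, σ i.rev = σ i'.rev → i = i' := by
    intro i _ i' _ h
    exact Fin.rev_injective (σ.injective h)
  refine ⟨F.image (fun i => σ i.rev), ?_, ?_, ?_⟩
  · rw [Finset.card_image_of_injOn hinj, card_filter_lt' k hkn]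
  · rw [Finset.sum_image hinj]
    rfl
  · intro j hj j' hj'
    simp only [Finset.mem_image, hF, mem_filter, mem_univ, true_and] at hj hj'
    obtain ⟨i', hi', rfl⟩ := hj'
    have hju : σ (σ.symm j).rev.rev = j := by simp
    have hnot : ¬ ((((σ.symm j).rev : Fin n) : ℕ) < k) := by
      intro h
      exact hj ⟨(σ.symm j).rev, h, hju⟩
    have hle : σ.symm j ≤ i'.rev := by
      have h1 : ((σ.symm j).rev : ℕ) = n - ((σ.symm j : ℕ) + 1) := Fin.val_rev _
      have h2 : ((i'.rev : Fin n) : ℕ) = n - ((i' : ℕ) + 1) := Fin.val_rev _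
      have := (σ.symm j).isLt
      have := i'.isLt
      rw [Fin.le_def, h2]; rw [h1] at hnot
      omega
    have := Tuple.monotone_sort (fun j : Fin n => |x j|) hle
    simpa [hσ] using this

theorem dual_of_kNorm {n : ℕ} (k : ℕ) (hk1 : 1 ≤ k) (hkn : k ≤ n) (y : Fin n → ℝ) :
    sSup {r : ℝ | ∃ x : Fin n → ℝ, kNorm k x ≤ 1 ∧ r = ∑ i, x i * y i} =
      max (Finset.univ.sup'
          (Finset.univ_nonempty_iff.mpr ⟨⟨0, lt_of_lt_of_le hk1 hkn⟩⟩)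
          fun i => |y i|)
        ((∑ i, |y i|) / k) := by
  classical
  have hn : 0 < n := lt_of_lt_of_le hk1 hkn
  have hne : (Finset.univ : Finset (Fin n)).Nonempty :=
    Finset.univ_nonempty_iff.mpr ⟨⟨0, hn⟩⟩
  set S := {r : ℝ | ∃ x : Fin n → ℝ, kNorm k x ≤ 1 ∧ r = ∑ i, x i * y i} with hS
  set sup : ℝ := Finset.univ.sup' hne fun i => |y i| with hsup
  set M : ℝ := max sup ((∑ i, |y i|) / k) with hMdef
  have hk0 : (0 : ℝ) < k := by exact_mod_cast hk1
  have hyM : ∀ i, |y i| ≤ M := fun i =>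
    le_trans (Finset.le_sup' (fun i => |y i|) (Finset.mem_univ i)) (le_max_left _ _)
  have hM0 : 0 ≤ M := le_trans (abs_nonneg (y ⟨0, hn⟩)) (hyM _)
  have hsumM : ∑ i, |y i| ≤ k * M := by
    have h := le_max_right sup ((∑ i, |y i|) / k)
    rw [div_le_iff₀ hk0] at h
    linarith
  -- upper bound
  have hub : ∀ r ∈ S, r ≤ M := by
    rintro r ⟨x, hx, rfl⟩
    obtain ⟨T, hTc, hTs, hTm⟩ := kNorm_structure k hkn x
    have hTne : T.Nonempty := Finset.card_pos.mp (by omega)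
    set α := T.inf' hTne fun j => |x j| with hα
    have hα0 : 0 ≤ α := Finset.le_inf' _ _ fun j _ => abs_nonneg _
    have hαle : ∀ j ∈ T, α ≤ |x j| := fun j hj => Finset.inf'_le _ hj
    have hout : ∀ j ∉ T, |x j| ≤ α := fun j hj =>
      Finset.le_inf' _ _ fun j' hj' => hTm j hj j' hj'
    have h1 : ∑ i, x i * y i ≤ ∑ i, |x i| * |y i| :=
      Finset.sum_le_sum fun i _ => by rw [← abs_mul]; exact le_abs_self _
    have hsplit : ∑ i ∈ Finset.univ \ T, |x i| * |y i| + ∑ i ∈ T, |x i| * |y i|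
        = ∑ i, |x i| * |y i| := Finset.sum_sdiff (Finset.subset_univ T)
    have h2 : ∑ i ∈ Finset.univ \ T, |x i| * |y i|
        ≤ α * ∑ i ∈ Finset.univ \ T, |y i| := by
      rw [Finset.mul_sum]
      exact Finset.sum_le_sum fun i hi =>
        mul_le_mul_of_nonneg_right (hout i (Finset.mem_sdiff.mp hi).2) (abs_nonneg _)
    have h3 : ∑ i ∈ T, |x i| * |y i|
        ≤ ((∑ i ∈ T, |x i|) - k * α) * M + α * ∑ i ∈ T, |y i| := by
      have hterm : ∀ i ∈ T, |x i| * |y i| ≤ (|x i| - α) * M + α * |y i| := by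
        intro i hi
        have e : |x i| * |y i| = (|x i| - α) * |y i| + α * |y i| := by ring
        have h' := mul_le_mul_of_nonneg_left (hyM i) (sub_nonneg.mpr (hαle i hi))
        linarith [e ▸ le_refl (|x i| * |y i|),
          mul_le_mul_of_nonneg_left (hyM i) (sub_nonneg.mpr (hαle i hi))]
      calc ∑ i ∈ T, |x i| * |y i|
          ≤ ∑ i ∈ T, ((|x i| - α) * M + α * |y i|) := Finset.sum_le_sum hterm
        _ = ((∑ i ∈ T, |x i|) - k * α) * M + α * ∑ i ∈ T, |y i| := by
            rw [Finset.sum_add_distrib, ← Finset.sum_mul, ← Finset.mul_sum,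
              Finset.sum_sub_distrib, Finset.sum_const, hTc, nsmul_eq_mul]
    have hyT : ∑ i ∈ Finset.univ \ T, |y i| + ∑ i ∈ T, |y i| = ∑ i, |y i| :=
      Finset.sum_sdiff (Finset.subset_univ T)
    have hαy : α * (∑ i, |y i|) ≤ α * (k * M) := mul_le_mul_of_nonneg_left hsumM hα0
    have hxk : ∑ i ∈ T, |x i| ≤ 1 := hTs ▸ hx
    have hfin : ((∑ i ∈ T, |x i|) - k * α) * M + α * (k * M)
        = (∑ i ∈ T, |x i|) * M := by ring
    have hlast : (∑ i ∈ T, |x i|) * M ≤ 1 * M :=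
      mul_le_mul_of_nonneg_right hxk hM0
    have hαdistrib : α * ∑ i ∈ Finset.univ \ T, |y i| + α * ∑ i ∈ T, |y i|
        = α * (∑ i, |y i|) := by rw [← mul_add, hyT]
    nlinarith [h1, h2, h3, hsplit, hαy, hfin, hlast, hαdistrib]
  -- membership: sup
  have mem1 : sup ∈ S := by
    obtain ⟨i0, -, hi0⟩ := Finset.exists_mem_eq_sup' hne fun i => |y i|
    set x : Fin n → ℝ := fun j => if j = i0 then (if 0 ≤ y i0 then 1 else -1) else 0 with hx
    have hxabs : ∀ j, |x j| = if j = i0 then 1 else 0 := by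
      intro j
      by_cases h : j = i0 <;> by_cases h2 : 0 ≤ y i0 <;> simp [hx, h, h2]
    refine ⟨x, ?_, ?_⟩
    · obtain ⟨T, hTc, hTs, -⟩ := kNorm_structure k hkn x
      rw [hTs]
      calc ∑ j ∈ T, |x j| ≤ ∑ j, |x j| :=
            Finset.sum_le_sum_of_subset_of_nonneg (Finset.subset_univ T)
              (fun j _ _ => abs_nonneg _)
        _ = 1 := by simp [hxabs]
    · have hsum : ∑ j, x j * y j = x i0 * y i0 :=
        Fintype.sum_eq_single i0 (fun b hb => by simp [hx, hb])
      rw [hsum, hsup, hi0]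
      simp only [hx]
      by_cases h2 : 0 ≤ y i0
      · simp [h2, abs_of_nonneg h2]
      · rw [abs_of_neg (lt_of_not_ge h2)]
        simp [h2]
  -- membership: (∑ |y|)/k
  have mem2 : (∑ i, |y i|) / k ∈ S := by
    set x : Fin n → ℝ := fun j => (if 0 ≤ y j then 1 else -1) / k with hx
    have hxabs : ∀ j, |x j| = 1 / k := by
      intro j
      by_cases h : 0 ≤ y j <;> simp [hx, h, abs_div, abs_of_pos hk0]
    refine ⟨x, ?_, ?_⟩
    · have : kNorm k x = ∑ i ∈ Finset.univ.filter (fun i : Fin n => (i : ℕ) < k),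
          (1 / (k : ℝ)) := by
        refine Finset.sum_congr rfl fun i _ => ?_
        show ((fun j => |x j|) ∘ Tuple.sort (fun j => |x j|)) i.rev = 1 / (k : ℝ)
        simp only [Function.comp_apply]
        exact hxabs _
      rw [this, Finset.sum_const, card_filter_lt' k hkn, nsmul_eq_mul]
      rw [mul_one_div, div_self (ne_of_gt hk0)]
    · rw [Finset.sum_div]
      refine Finset.sum_congr rfl fun i _ => ?_
      by_cases h : 0 ≤ y i
      · rw [abs_of_nonneg h]; simp [hx, h]; ring
      · rw [abs_of_neg (lt_of_not_ge h)]; simp [hx, h]; ring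
  -- conclude
  have hbdd : BddAbove S := ⟨M, fun r hr => hub r hr⟩
  apply le_antisymm
  · exact Real.sSup_le hub hM0
  · exact max_le (le_csSup hbdd mem1) (le_csSup hbdd mem2)
end

section
/- Let • be a bilinear map on n×n complex matrices with right adjoint •_R defined by Tr((A • B)C) = Tr((B •_R C)A). If Σ_{i=1}^k σ_i(A • B) ≤ Σ_{i=1}^k σ_i(A)σ_i(B) holds for all A, B and all 1 ≤ k ≤ n, then σ_1(A •_R B) ≤ σ_1(A)σ_1(B) for all A, B. -/
open Matrix Finset

section Aux

variable {n : ℕ}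

lemma sv_nonneg (A : Matrix (Fin n) (Fin n) ℂ) (i : Fin n) : 0 ≤ singularValue A i :=
  Real.sqrt_nonneg _

lemma sv_sq (A : Matrix (Fin n) (Fin n) ℂ) (i : Fin n) :
    singularValue A i ^ 2 = (((Matrix.isHermitian_conjTranspose_mul_self A)).eigenvalues ∘
      Tuple.sort ((Matrix.isHermitian_conjTranspose_mul_self A)).eigenvalues) i.rev := by
  apply Real.sq_sqrt
  exact Matrix.eigenvalues_conjTranspose_mul_self_nonneg A _

lemma sv_le_top (hn : 0 < n) (A : Matrix (Fin n) (Fin n) ℂ) (i : Fin n) :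
    singularValue A i ≤ singularValue A ⟨0, hn⟩ := by
  apply Real.sqrt_le_sqrt
  have := Tuple.monotone_sort ((Matrix.isHermitian_conjTranspose_mul_self A)).eigenvalues
  exact this (by simp [Fin.rev, Fin.le_def]; omega)

lemma eig_le_sv_top_sq (hn : 0 < n) (A : Matrix (Fin n) (Fin n) ℂ) (j : Fin n) :
    ((Matrix.isHermitian_conjTranspose_mul_self A)).eigenvalues j ≤ singularValue A ⟨0, hn⟩ ^ 2 := by
  rw [sv_sq]
  set lam := ((Matrix.isHermitian_conjTranspose_mul_self A)).eigenvalues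
  have hm := Tuple.monotone_sort lam
  have : lam j = (lam ∘ Tuple.sort lam) ((Tuple.sort lam).symm j) := by simp
  rw [this]
  apply hm
  simp [Fin.le_def, Fin.rev]
  omega

lemma sum_sv (A : Matrix (Fin n) (Fin n) ℂ) :
    ∑ i, singularValue A i =
      ∑ j, Real.sqrt (((Matrix.isHermitian_conjTranspose_mul_self A)).eigenvalues j) := by
  unfold singularValue
  rw [← Equiv.sum_comp (Fin.revPerm.trans (Tuple.sort ((Matrix.isHermitian_conjTranspose_mul_self A)).eigenvalues))
    (fun j => Real.sqrt (((Matrix.isHermitian_conjTranspose_mul_self A)).eigenvalues j))]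
  simp

noncomputable def normSqV {n : ℕ} (x : Fin n → ℂ) : ℝ := ∑ i, Complex.normSq (x i)

lemma normSqV_nonneg (x : Fin n → ℂ) : 0 ≤ normSqV x :=
  Finset.sum_nonneg fun i _ => Complex.normSq_nonneg _

lemma star_dot_self (x : Fin n → ℂ) : star x ⬝ᵥ x = (normSqV x : ℂ) := by
  simp [dotProduct, normSqV, Complex.normSq_eq_conj_mul_self]

lemma key_quad (A : Matrix (Fin n) (Fin n) ℂ) (x : Fin n → ℂ) :
    ∃ c : Fin n → ℝ, (∀ i, 0 ≤ c i) ∧ (∑ i, c i = normSqV x) ∧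
      star x ⬝ᵥ ((Aᴴ * A) *ᵥ x) =
        ((∑ i, (Matrix.isHermitian_conjTranspose_mul_self A).eigenvalues i * c i : ℝ) : ℂ) := by
  set hH := Matrix.isHermitian_conjTranspose_mul_self A
  set U : Matrix (Fin n) (Fin n) ℂ := (hH.eigenvectorUnitary : Matrix (Fin n) (Fin n) ℂ)
  set y : Fin n → ℂ := (star U) *ᵥ x with hy
  refine ⟨fun i => Complex.normSq (y i), fun i => Complex.normSq_nonneg _, ?_, ?_⟩
  · have h1 : star y ⬝ᵥ y = star x ⬝ᵥ x := by
      rw [hy, star_mulVec, dotProduct_mulVec, vecMul_vecMul]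
      congr 1
      rw [star_eq_conjTranspose, conjTranspose_conjTranspose]
      have : U * star U = 1 := Matrix.mem_unitaryGroup_iff.mp hH.eigenvectorUnitary.2
      rw [← star_eq_conjTranspose, this, Matrix.vecMul_one]
    have := congrArg Complex.re (h1.trans (star_dot_self x))
    rw [star_dot_self y] at this
    simpa [normSqV] using this
  · have hspec := hH.spectral_theorem
    rw [congrArg (fun M => star x ⬝ᵥ (M *ᵥ x)) hspec]
    simp only [Unitary.conjStarAlgAut_apply, ← Matrix.mulVec_mulVec]
    rw [dotProduct_mulVec]
    have hrow : star x ᵥ* U = star y := by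
      rw [hy, star_mulVec, star_eq_conjTranspose, conjTranspose_conjTranspose]
    rw [hrow, ← hy]
    rw [Complex.ofReal_sum]
    simp only [dotProduct, Matrix.mulVec_diagonal, Function.comp_apply, Pi.star_apply]
    refine Finset.sum_congr rfl fun i _ => ?_
    rw [Complex.ofReal_mul, Complex.normSq_eq_conj_mul_self]
    simp [RCLike.ofReal]
    ring

lemma star_dot_AAx (A : Matrix (Fin n) (Fin n) ℂ) (x : Fin n → ℂ) :
    star (A *ᵥ x) ⬝ᵥ (A *ᵥ x) = star x ⬝ᵥ ((Aᴴ * A) *ᵥ x) := by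
  rw [star_mulVec, dotProduct_mulVec, dotProduct_mulVec, vecMul_vecMul]

lemma norm_mulVec_le (hn : 0 < n) (A : Matrix (Fin n) (Fin n) ℂ) (x : Fin n → ℂ) :
    normSqV (A *ᵥ x) ≤ singularValue A ⟨0, hn⟩ ^ 2 * normSqV x := by
  obtain ⟨c, hc0, hcs, hce⟩ := key_quad A x
  have h1 : (normSqV (A *ᵥ x) : ℂ) = star (A *ᵥ x) ⬝ᵥ (A *ᵥ x) := (star_dot_self _).symm
  rw [star_dot_AAx, hce] at h1
  have h2 : normSqV (A *ᵥ x) = ∑ i, (Matrix.isHermitian_conjTranspose_mul_self A).eigenvalues i * c i :=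
    by exact_mod_cast h1
  rw [h2, ← hcs, Finset.mul_sum]
  exact Finset.sum_le_sum fun i _ =>
    mul_le_mul_of_nonneg_right (eig_le_sv_top_sq hn A i) (hc0 i)

lemma cs (u w : Fin n → ℂ) :
    ‖star u ⬝ᵥ w‖ ≤ Real.sqrt (normSqV u) * Real.sqrt (normSqV w) := by
  let u' : EuclideanSpace ℂ (Fin n) := (WithLp.equiv 2 _).symm u
  let w' : EuclideanSpace ℂ (Fin n) := (WithLp.equiv 2 _).symm w
  have h1 : (inner ℂ u' w' : ℂ) = star u ⬝ᵥ w :=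
    (EuclideanSpace.inner_eq_star_dotProduct u' w').trans (dotProduct_comm _ _)
  have h2 : ‖u'‖ = Real.sqrt (normSqV u) := by
    rw [EuclideanSpace.norm_eq]
    congr 1
    exact Finset.sum_congr rfl fun i _ => by
      rw [show u' i = u i from rfl, Complex.normSq_eq_norm_sq]
  have h3 : ‖w'‖ = Real.sqrt (normSqV w) := by
    rw [EuclideanSpace.norm_eq]
    congr 1
    exact Finset.sum_congr rfl fun i _ => by
      rw [show w' i = w i from rfl, Complex.normSq_eq_norm_sq]
  calc ‖star u ⬝ᵥ w‖ = ‖(inner ℂ u' w' : ℂ)‖ := by rw [h1]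
    _ ≤ ‖u'‖ * ‖w'‖ := norm_inner_le_norm u' w'
    _ = _ := by rw [h2, h3]

lemma norm_eq_sqrt_normSqV (x : EuclideanSpace ℂ (Fin n)) :
    ‖x‖ = Real.sqrt (normSqV ⇑x) := by
  rw [EuclideanSpace.norm_eq]
  congr 1
  exact Finset.sum_congr rfl fun i _ => by
    rw [Complex.normSq_eq_norm_sq]

lemma diag_entry (U X : Matrix (Fin n) (Fin n) ℂ) (i : Fin n) :
    (star U * X * U) i i = star (fun j => U j i) ⬝ᵥ (X *ᵥ fun j => U j i) := by
  simp only [Matrix.mul_apply, dotProduct, Matrix.mulVec, Matrix.star_apply,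
    Pi.star_apply, dotProduct, Finset.sum_mul, Finset.mul_sum, star_eq_conjTranspose,
    Matrix.conjTranspose_apply]
  rw [Finset.sum_comm]
  exact Finset.sum_congr rfl fun j _ => Finset.sum_congr rfl fun k _ => by ring

lemma trace_conj (U X : Matrix (Fin n) (Fin n) ℂ) (hU : U * star U = 1) :
    (star U * X * U).trace = X.trace := by
  rw [Matrix.trace_mul_comm, ← Matrix.mul_assoc, hU, Matrix.one_mul]

lemma trace_hoelder (hn : 0 < n) (M B : Matrix (Fin n) (Fin n) ℂ) :
    ‖(M * B).trace‖ ≤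
      singularValue B ⟨0, hn⟩ * ∑ i, singularValue M i := by
  set hH := Matrix.isHermitian_conjTranspose_mul_self M with hHdef
  set U : Matrix (Fin n) (Fin n) ℂ := (hH.eigenvectorUnitary : Matrix (Fin n) (Fin n) ℂ) with hUdef
  have hU : U * star U = 1 := Matrix.mem_unitaryGroup_iff.mp hH.eigenvectorUnitary.2
  have htr : (M * B).trace = ∑ i, star (fun j => U j i) ⬝ᵥ ((B * M) *ᵥ fun j => U j i) := by
    rw [Matrix.trace_mul_comm, ← trace_conj U (B * M) hU, Matrix.trace]
    exact Finset.sum_congr rfl fun i _ => diag_entry U (B * M) i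
  have hcol : ∀ i : Fin n, (fun j => U j i) = ⇑(hH.eigenvectorBasis i) := by
    intro i; funext j; exact hH.eigenvectorUnitary_apply j i
  have hunit : ∀ i : Fin n, normSqV (fun j => U j i) = 1 := by
    intro i
    have h1 : ‖hH.eigenvectorBasis i‖ = 1 := hH.eigenvectorBasis.orthonormal.1 i
    rw [norm_eq_sqrt_normSqV] at h1
    have := congrArg (fun t => t ^ 2) h1
    simpa [Real.sq_sqrt (normSqV_nonneg _), hcol i] using this
  have hMu : ∀ i : Fin n, normSqV (M *ᵥ fun j => U j i) = hH.eigenvalues i := by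
    intro i
    have h1 : star (M *ᵥ fun j => U j i) ⬝ᵥ (M *ᵥ fun j => U j i)
        = star (fun j => U j i) ⬝ᵥ ((Mᴴ * M) *ᵥ fun j => U j i) := star_dot_AAx M _
    rw [hcol i] at h1
    rw [hH.mulVec_eigenvectorBasis] at h1
    have h2 : (hH.eigenvalues i) • ⇑(hH.eigenvectorBasis i)
        = ((hH.eigenvalues i : ℂ)) • ⇑(hH.eigenvectorBasis i) := by
      funext j; exact Complex.real_smul
    rw [h2, dotProduct_smul, star_dot_self] at h1
    rw [star_dot_self] at h1
    have := congrArg Complex.re h1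
    simpa [hcol i, hunit i, hcol i ▸ hunit i] using this
  calc ‖(M * B).trace‖
      ≤ ∑ i, ‖star (fun j => U j i) ⬝ᵥ ((B * M) *ᵥ fun j => U j i)‖ := by
        rw [htr]; exact norm_sum_le _ _
    _ ≤ ∑ i, singularValue B ⟨0, hn⟩ * Real.sqrt (hH.eigenvalues i) := by
        refine Finset.sum_le_sum fun i _ => ?_
        calc ‖star (fun j => U j i) ⬝ᵥ ((B * M) *ᵥ fun j => U j i)‖
            ≤ Real.sqrt (normSqV fun j => U j i) *
                Real.sqrt (normSqV ((B * M) *ᵥ fun j => U j i)) := cs _ _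
          _ = Real.sqrt (normSqV (B *ᵥ (M *ᵥ fun j => U j i))) := by
              rw [hunit i, Real.sqrt_one, one_mul, Matrix.mulVec_mulVec]
          _ ≤ Real.sqrt (singularValue B ⟨0, hn⟩ ^ 2 * normSqV (M *ᵥ fun j => U j i)) :=
              Real.sqrt_le_sqrt (norm_mulVec_le hn B _)
          _ = singularValue B ⟨0, hn⟩ * Real.sqrt (hH.eigenvalues i) := by
              rw [hMu i, Real.sqrt_mul (sq_nonneg _), Real.sqrt_sq (sv_nonneg B _)]
    _ = singularValue B ⟨0, hn⟩ * ∑ i, singularValue M i := by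
        rw [← Finset.mul_sum, sum_sv M]

lemma herm_trace_eig {X : Matrix (Fin n) (Fin n) ℂ} (hX : X.IsHermitian) :
    X.trace = ((∑ i, hX.eigenvalues i : ℝ) : ℂ) := by
  have hspec := hX.spectral_theorem
  set U : Matrix (Fin n) (Fin n) ℂ := (hX.eigenvectorUnitary : Matrix (Fin n) (Fin n) ℂ)
  have hU : star U * U = 1 := Matrix.mem_unitaryGroup_iff'.mp hX.eigenvectorUnitary.2
  calc X.trace = (U * Matrix.diagonal (RCLike.ofReal ∘ hX.eigenvalues) * star U).trace := by
        exact congrArg Matrix.trace hspec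
    _ = (star U * U * Matrix.diagonal (RCLike.ofReal ∘ hX.eigenvalues)).trace := by
        rw [Matrix.trace_mul_comm, Matrix.mul_assoc]
    _ = (Matrix.diagonal (RCLike.ofReal ∘ hX.eigenvalues)).trace := by rw [hU, Matrix.one_mul]
    _ = ((∑ i, hX.eigenvalues i : ℝ) : ℂ) := by
        rw [Matrix.trace_diagonal]; push_cast; rfl

lemma herm_idem_eig {X : Matrix (Fin n) (Fin n) ℂ} (hX : X.IsHermitian) (hidem : X * X = X)
    (i : Fin n) : hX.eigenvalues i = 0 ∨ hX.eigenvalues i = 1 := by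
  set U : Matrix (Fin n) (Fin n) ℂ := (hX.eigenvectorUnitary : Matrix (Fin n) (Fin n) ℂ)
  have hU : U * star U = 1 := Matrix.mem_unitaryGroup_iff.mp hX.eigenvectorUnitary.2
  have hD : star U * X * U = Matrix.diagonal (RCLike.ofReal ∘ hX.eigenvalues) := by
    have := hX.conjStarAlgAut_star_eigenvectorUnitary
    rw [Unitary.conjStarAlgAut_apply] at this
    simpa [U] using this
  have h2 : (Matrix.diagonal (RCLike.ofReal ∘ hX.eigenvalues) : Matrix (Fin n) (Fin n) ℂ) *
      Matrix.diagonal (RCLike.ofReal ∘ hX.eigenvalues) =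
      Matrix.diagonal (RCLike.ofReal ∘ hX.eigenvalues) := by
    conv_lhs => rw [← hD]
    calc (star U * X * U) * (star U * X * U) = star U * (X * (U * star U) * X) * U := by
          simp only [Matrix.mul_assoc]
      _ = star U * (X * X) * U := by rw [hU]; simp only [Matrix.mul_one, Matrix.mul_assoc]
      _ = star U * X * U := by rw [hidem, Matrix.mul_assoc]
      _ = _ := hD
  rw [Matrix.diagonal_mul_diagonal] at h2
  have h4 : ((hX.eigenvalues i : ℂ)) * (hX.eigenvalues i : ℂ) = (hX.eigenvalues i : ℂ) := by
    have h3 := congrFun (congrFun h2 i) i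
    simpa [Matrix.diagonal] using h3
  have h5 : hX.eigenvalues i * hX.eigenvalues i = hX.eigenvalues i := by exact_mod_cast h4
  rcases mul_eq_zero.mp (show (hX.eigenvalues i) * (hX.eigenvalues i - 1) = 0 by ring_nf; linarith [h5]) with h | h
  · exact Or.inl h
  · exact Or.inr (by linarith)

lemma conjT_vecMulVec (u v : Fin n → ℂ) :
    (Matrix.vecMulVec u (star v))ᴴ = Matrix.vecMulVec v (star u) := by
  ext i j
  simp [Matrix.conjTranspose_apply, Matrix.vecMulVec_apply, mul_comm]

lemma vecMulVec_mul_vecMulVec (a b c d : Fin n → ℂ) :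
    Matrix.vecMulVec a (star b) * Matrix.vecMulVec c (star d)
      = (star b ⬝ᵥ c) • Matrix.vecMulVec a (star d) := by
  ext i j
  simp only [Matrix.mul_apply, Matrix.vecMulVec_apply, Matrix.smul_apply, dotProduct,
    Pi.star_apply, smul_eq_mul, Finset.sum_mul]
  exact Finset.sum_congr rfl fun k _ => by ring

lemma trace_vecMulVec (v : Fin n → ℂ) (hv : normSqV v = 1) :
    (Matrix.vecMulVec v (star v)).trace = 1 := by
  have : (Matrix.vecMulVec v (star v)).trace = star v ⬝ᵥ v := by
    simp [Matrix.trace, Matrix.diag, Matrix.vecMulVec_apply, dotProduct, mul_comm]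
  rw [this, star_dot_self, hv, Complex.ofReal_one]

lemma rank1_sum (hn : 0 < n) (A : Matrix (Fin n) (Fin n) ℂ) (u v : Fin n → ℂ)
    (hu : normSqV u = 1) (hv : normSqV v = 1) :
    ∑ i, singularValue (Matrix.vecMulVec u (star v)) i * singularValue A i ≤
      singularValue A ⟨0, hn⟩ := by
  set C := Matrix.vecMulVec u (star v) with hC
  set hH := Matrix.isHermitian_conjTranspose_mul_self C with hHdef
  set lam := hH.eigenvalues with hlam
  have hCP : Cᴴ * C = Matrix.vecMulVec v (star v) := by
    rw [hC, conjT_vecMulVec, vecMulVec_mul_vecMulVec, star_dot_self, hu, Complex.ofReal_one,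
      one_smul]
  have hidem : (Cᴴ * C) * (Cᴴ * C) = Cᴴ * C := by
    rw [hCP, vecMulVec_mul_vecMulVec, star_dot_self, hv, Complex.ofReal_one, one_smul]
  have h01 : ∀ i, lam i = 0 ∨ lam i = 1 := herm_idem_eig hH hidem
  have htr : ∑ i, lam i = 1 := by
    have h1 := herm_trace_eig hH
    have h2 : (Cᴴ * C).trace = 1 := by rw [hCP]; exact trace_vecMulVec v hv
    exact_mod_cast (h1.symm.trans h2)
  have hsv : ∀ i : Fin n, singularValue C i = lam (Tuple.sort lam i.rev) := by
    intro i
    rcases h01 (Tuple.sort lam i.rev) with h | h <;>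
      simp [singularValue, Function.comp, ← hHdef, ← hlam, h]
  calc ∑ i, singularValue C i * singularValue A i
      ≤ ∑ i, singularValue C i * singularValue A ⟨0, hn⟩ :=
        Finset.sum_le_sum fun i _ =>
          mul_le_mul_of_nonneg_left (sv_le_top hn A i) (sv_nonneg C i)
    _ = (∑ i, singularValue C i) * singularValue A ⟨0, hn⟩ := by rw [Finset.sum_mul]
    _ = singularValue A ⟨0, hn⟩ := by
        have : ∑ i, singularValue C i = ∑ j, lam j := by
          rw [Finset.sum_congr rfl fun i _ => hsv i]
          exact Equiv.sum_comp (Fin.revPerm.trans (Tuple.sort lam)) lam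
        rw [this, htr, one_mul]

lemma mul_vecMulVec (X : Matrix (Fin n) (Fin n) ℂ) (a b : Fin n → ℂ) :
    X * Matrix.vecMulVec a b = Matrix.vecMulVec (X *ᵥ a) b := by
  ext i j
  simp only [Matrix.mul_apply, Matrix.vecMulVec_apply, Matrix.mulVec, dotProduct,
    Finset.sum_mul]
  exact Finset.sum_congr rfl fun k _ => by ring

lemma trace_vecMulVec' (w v : Fin n → ℂ) :
    (Matrix.vecMulVec w (star v)).trace = star v ⬝ᵥ w := by
  simp [Matrix.trace, Matrix.diag, Matrix.vecMulVec_apply, dotProduct, mul_comm]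

lemma normSqV_smul (r : ℝ) (w : Fin n → ℂ) :
    normSqV (((r : ℂ)) • w) = r ^ 2 * normSqV w := by
  simp [normSqV, Complex.normSq_mul, Complex.normSq_ofReal, Finset.mul_sum, pow_two]

lemma unit_eigvec (X : Matrix (Fin n) (Fin n) ℂ) (j : Fin n) :
    normSqV ⇑((Matrix.isHermitian_conjTranspose_mul_self X).eigenvectorBasis j) = 1 := by
  set hH := Matrix.isHermitian_conjTranspose_mul_self X
  have h1 : ‖hH.eigenvectorBasis j‖ = 1 := hH.eigenvectorBasis.orthonormal.1 j
  rw [norm_eq_sqrt_normSqV] at h1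
  have := congrArg (fun t => t ^ 2) h1
  simpa [Real.sq_sqrt (normSqV_nonneg _)] using this

lemma normSqV_mulVec_eigen (X : Matrix (Fin n) (Fin n) ℂ) (j : Fin n) :
    normSqV (X *ᵥ ⇑((Matrix.isHermitian_conjTranspose_mul_self X).eigenvectorBasis j))
      = (Matrix.isHermitian_conjTranspose_mul_self X).eigenvalues j := by
  set hH := Matrix.isHermitian_conjTranspose_mul_self X
  set u : Fin n → ℂ := ⇑(hH.eigenvectorBasis j) with hu
  have h1 : star (X *ᵥ u) ⬝ᵥ (X *ᵥ u) = star u ⬝ᵥ ((Xᴴ * X) *ᵥ u) := star_dot_AAx X u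
  rw [hu, hH.mulVec_eigenvectorBasis] at h1
  have h2 : (hH.eigenvalues j) • ⇑(hH.eigenvectorBasis j)
      = ((hH.eigenvalues j : ℂ)) • ⇑(hH.eigenvectorBasis j) := by
    funext k; exact Complex.real_smul
  rw [h2, dotProduct_smul, star_dot_self, star_dot_self] at h1
  have := congrArg Complex.re h1
  simpa [← hu, unit_eigvec X j, show normSqV u = 1 from unit_eigvec X j] using this

lemma attain (hn : 0 < n) (X : Matrix (Fin n) (Fin n) ℂ)
    (hs : 0 < singularValue X ⟨0, hn⟩) :
    ∃ u v : Fin n → ℂ, normSqV u = 1 ∧ normSqV v = 1 ∧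
      (X * Matrix.vecMulVec u (star v)).trace = ((singularValue X ⟨0, hn⟩ : ℝ) : ℂ) := by
  set s := singularValue X ⟨0, hn⟩ with hsdef
  set hH := Matrix.isHermitian_conjTranspose_mul_self X
  set j := Tuple.sort hH.eigenvalues (⟨0, hn⟩ : Fin n).rev with hj
  have hlj : hH.eigenvalues j = s ^ 2 := (sv_sq X ⟨0, hn⟩).symm
  set u : Fin n → ℂ := ⇑(hH.eigenvectorBasis j) with hu
  have hXu : normSqV (X *ᵥ u) = s ^ 2 := by
    rw [hu, normSqV_mulVec_eigen X j, hlj]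
  set v : Fin n → ℂ := ((s⁻¹ : ℝ) : ℂ) • (X *ᵥ u) with hv
  refine ⟨u, v, unit_eigvec X j, ?_, ?_⟩
  · rw [hv, normSqV_smul, hXu]
    field_simp
  · rw [mul_vecMulVec, trace_vecMulVec']
    rw [hv, star_smul, smul_dotProduct]
    rw [star_dot_self, hXu]
    have hc : star ((s⁻¹ : ℝ) : ℂ) = ((s⁻¹ : ℝ) : ℂ) := Complex.conj_ofReal _
    rw [hc, smul_eq_mul, ← Complex.ofReal_mul]
    congr 1
    field_simp


end Aux

theorem horn_mathias_opNorm_of_kyFan {n : ℕ} (hn : 0 < n)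
    (f g : Matrix (Fin n) (Fin n) ℂ →ₗ[ℂ] Matrix (Fin n) (Fin n) ℂ →ₗ[ℂ]
      Matrix (Fin n) (Fin n) ℂ)
    (hadj : ∀ A B C : Matrix (Fin n) (Fin n) ℂ,
      (f A B * C).trace = (g B C * A).trace)
    (h : ∀ A B : Matrix (Fin n) (Fin n) ℂ, ∀ k : ℕ, 1 ≤ k → k ≤ n →
      ∑ i ∈ Finset.univ.filter (fun i : Fin n => (i : ℕ) < k), singularValue (f A B) i ≤
        ∑ i ∈ Finset.univ.filter (fun i : Fin n => (i : ℕ) < k),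
          singularValue A i * singularValue B i) :
    ∀ A B : Matrix (Fin n) (Fin n) ℂ,
      singularValue (g A B) ⟨0, hn⟩ ≤
        singularValue A ⟨0, hn⟩ * singularValue B ⟨0, hn⟩ := by
  intro A B
  set s := singularValue (g A B) ⟨0, hn⟩ with hsdef
  rcases le_or_gt s 0 with hs | hs
  · exact hs.trans (mul_nonneg (sv_nonneg A _) (sv_nonneg B _))
  obtain ⟨u, v, hu, hv, htrace⟩ := attain hn (g A B) hs
  set C := Matrix.vecMulVec u (star v) with hC
  have hfil : Finset.univ.filter (fun i : Fin n => (i : ℕ) < n) = (Finset.univ : Finset (Fin n)) :=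
    Finset.filter_true_of_mem fun i _ => i.isLt
  have hkey := h C A n (by omega) le_rfl
  rw [hfil] at hkey
  have hadj' := hadj C A B
  calc s = ‖(f C A * B).trace‖ := by
        rw [hadj', htrace, Complex.norm_real, Real.norm_of_nonneg hs.le]
    _ ≤ singularValue B ⟨0, hn⟩ * ∑ i, singularValue (f C A) i := trace_hoelder hn (f C A) B
    _ ≤ singularValue B ⟨0, hn⟩ * ∑ i, singularValue C i * singularValue A i :=
        mul_le_mul_of_nonneg_left hkey (sv_nonneg B _)
    _ ≤ singularValue B ⟨0, hn⟩ * singularValue A ⟨0, hn⟩ :=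
        mul_le_mul_of_nonneg_left (rank1_sum hn A u v hu hv) (sv_nonneg B _)
    _ = singularValue A ⟨0, hn⟩ * singularValue B ⟨0, hn⟩ := mul_comm _ _
end

section
/- There exist 3×3 matrices X, Y (namely X = Y = (1/√3)·J where J is the all-ones 3×3 matrix, so all columns of X and Y are unit vectors) and a 3×3 unitary U such that the largest singular value of the Fan product (X*Y) ⋆ U exceeds 1; explicitly U = (1/3)·[[2,1,2],[−2,2,1],[1,2,−2]] works. -/
open Matrix Finset

/-- The Fan product. -/
def fanProduct {n : ℕ} (A B : Matrix (Fin n) (Fin n) ℂ) : Matrix (Fin n) (Fin n) ℂ :=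
  Matrix.of fun i j => if i = j then -(A i i * B i i) else A i j * B i j

theorem fanProduct_contraction_lemma_fails :
    ∃ X Y U : Matrix (Fin 3) (Fin 3) ℂ,
      X = (Real.sqrt 3 : ℂ)⁻¹ • Matrix.of (fun _ _ => (1 : ℂ)) ∧ Y = X ∧
      U = (3 : ℂ)⁻¹ • !![(2 : ℂ), 1, 2; -2, 2, 1; 1, 2, -2] ∧
      Uᴴ * U = 1 ∧
      1 < singularValue (fanProduct (Xᴴ * Y) U) ⟨0, by norm_num⟩ := by
  refine ⟨_, _, _, rfl, rfl, rfl, ?_, ?_⟩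
  · ext i j
    fin_cases i <;> fin_cases j <;>
      simp [Matrix.mul_apply, Fin.sum_univ_three, Matrix.conjTranspose_apply, Matrix.one_apply,
        Matrix.vecHead, Matrix.vecTail, map_ofNat, map_neg, _root_.map_one] <;>
      norm_num
  · set X : Matrix (Fin 3) (Fin 3) ℂ := (Real.sqrt 3 : ℂ)⁻¹ • Matrix.of (fun _ _ => (1 : ℂ))
      with hX
    set U : Matrix (Fin 3) (Fin 3) ℂ := (3 : ℂ)⁻¹ • !![(2 : ℂ), 1, 2; -2, 2, 1; 1, 2, -2] with hU
    have h3 : ((Real.sqrt 3 : ℝ) : ℂ)^2 = 3 := by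
      rw [← Complex.ofReal_pow, Real.sq_sqrt (by norm_num : (0:ℝ) ≤ 3)]; norm_num
    have hXY : Xᴴ * X = Matrix.of (fun _ _ => (1:ℂ)) := by
      ext i j
      simp [hX, Matrix.mul_apply, Matrix.conjTranspose_apply, Fin.sum_univ_three]
      ring_nf
      rw [inv_pow, h3]
      norm_num
    set M := fanProduct (Xᴴ * X) U with hM
    have hG : Mᴴ * M = !![(1:ℂ), 4/9, -4/9; 4/9, 1, 4/9; -4/9, 4/9, 1] := by
      rw [hM, hXY]
      ext i j
      fin_cases i <;> fin_cases j <;>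
        simp [fanProduct, hU, Matrix.mul_apply, Fin.sum_univ_three, Matrix.conjTranspose_apply,
          Matrix.vecHead, Matrix.vecTail, map_ofNat, map_neg, _root_.map_one] <;>
        norm_num
    have hH := Matrix.isHermitian_conjTranspose_mul_self M
    have hs : (13/9 : ℝ) ∈ spectrum ℝ (Mᴴ * M) := by
      rw [spectrum.mem_iff, Matrix.isUnit_iff_isUnit_det]
      have hdet : (algebraMap ℝ (Matrix (Fin 3) (Fin 3) ℂ) (13/9) - Mᴴ * M).det = 0 := by
        rw [hG]
        simp [Matrix.det_fin_three, Matrix.sub_apply, Matrix.algebraMap_matrix_apply]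
        norm_num
      rw [hdet]
      exact fun h => by simp at h
    rw [hH.spectrum_real_eq_range_eigenvalues] at hs
    obtain ⟨i, hi⟩ := hs
    have key : (13/9 : ℝ) ≤ (hH.eigenvalues ∘ Tuple.sort hH.eigenvalues)
        ((⟨0, by norm_num⟩ : Fin 3).rev) := by
      have h1 : hH.eigenvalues i
          = (hH.eigenvalues ∘ Tuple.sort hH.eigenvalues) ((Tuple.sort hH.eigenvalues).symm i) := by
        simp
      rw [← hi, h1]
      have h2 : (⟨0, by norm_num⟩ : Fin 3).rev = Fin.last 2 := by decide
      rw [h2]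
      exact Tuple.monotone_sort hH.eigenvalues (Fin.le_last _)
    unfold singularValue
    rw [Real.lt_sqrt (by norm_num)]
    calc (1:ℝ)^2 < 13/9 := by norm_num
    _ ≤ _ := key
end

section
/- Every contraction in M_n(ℂ) (matrix with operator norm at most 1) is a convex combination of unitary matrices. -/
open Matrix Finset

theorem contraction_convexCombination_unitaries {n : ℕ} (hn : 0 < n)
    (S : Matrix (Fin n) (Fin n) ℂ) (hS : singularValue S ⟨0, hn⟩ ≤ 1) :
    ∃ (m : ℕ) (t : Fin m → ℝ) (U : Fin m → Matrix (Fin n) (Fin n) ℂ),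
      (∀ i, 0 ≤ t i) ∧ (∑ i, t i) = 1 ∧ (∀ i, (U i)ᴴ * U i = 1) ∧
      S = ∑ i, (t i : ℂ) • U i := by
  classical
  set hH := Matrix.isHermitian_conjTranspose_mul_self S with hHdef
  set d : Fin n → ℝ := hH.eigenvalues with hd_def
  have hd0 : ∀ i, 0 ≤ d i := fun i =>
    Matrix.eigenvalues_conjTranspose_mul_self_nonneg S i
  have htop : ∀ j : Fin n, j ≤ Fin.rev ⟨0, hn⟩ := by
    intro j
    rw [Fin.le_def, Fin.val_rev]
    have h0 : (⟨0, hn⟩ : Fin n).val = 0 := rfl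
    have := j.isLt
    omega
  have hd1 : ∀ i, d i ≤ 1 := by
    intro i
    obtain ⟨j, hj⟩ : ∃ j, Tuple.sort d j = i := ⟨(Tuple.sort d).symm i, by simp⟩
    have h1 : (d ∘ Tuple.sort d) j ≤ (d ∘ Tuple.sort d) (Fin.rev ⟨0, hn⟩) :=
      Tuple.monotone_sort d (htop j)
    have h2 : (d ∘ Tuple.sort d) (Fin.rev ⟨0, hn⟩) ≤ 1 := by
      have hnn : 0 ≤ (d ∘ Tuple.sort d) (Fin.rev ⟨0, hn⟩) := hd0 _
      have hs : Real.sqrt ((d ∘ Tuple.sort d) (Fin.rev ⟨0, hn⟩)) ≤ 1 := hS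
      nlinarith [Real.sq_sqrt hnn, Real.sqrt_nonneg ((d ∘ Tuple.sort d) (Fin.rev ⟨0, hn⟩))]
    calc d i = (d ∘ Tuple.sort d) j := by simp [hj]
    _ ≤ 1 := le_trans h1 h2
  set V : Matrix (Fin n) (Fin n) ℂ := hH.eigenvectorUnitary.1 with hV_def
  have hVmem : V ∈ Matrix.unitaryGroup (Fin n) ℂ := hH.eigenvectorUnitary.2
  have hV1 : Vᴴ * V = 1 := by
    rw [← Matrix.star_eq_conjTranspose]; exact Matrix.mem_unitaryGroup_iff'.mp hVmem
  have hV2 : V * Vᴴ = 1 := by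
    rw [← Matrix.star_eq_conjTranspose]; exact Matrix.mem_unitaryGroup_iff.mp hVmem
  have spec : Sᴴ * S = V * Matrix.diagonal (fun i => (d i : ℂ)) * Vᴴ := by
    have := hH.spectral_theorem
    rw [Unitary.conjStarAlgAut_apply] at this
    rw [← Matrix.star_eq_conjTranspose]
    convert this using 3
    all_goals rfl
  set B : Matrix (Fin n) (Fin n) ℂ := S * V with hB_def
  have hB : Bᴴ * B = Matrix.diagonal (fun i => (d i : ℂ)) := by
    have h : Bᴴ * B = Vᴴ * (V * ((Matrix.diagonal fun i => (d i : ℂ)) * (Vᴴ * V))) := by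
      rw [hB_def, Matrix.conjTranspose_mul, Matrix.mul_assoc, ← Matrix.mul_assoc Sᴴ S V, spec]
      simp only [Matrix.mul_assoc]
    rw [h, hV1, Matrix.mul_one, ← Matrix.mul_assoc, hV1, Matrix.one_mul]
  have hBentry : ∀ i j, ∑ k, (starRingEnd ℂ) (B k i) * B k j
      = Matrix.diagonal (fun i => (d i : ℂ)) i j := by
    intro i j
    rw [← hB]
    simp [Matrix.mul_apply, Matrix.conjTranspose_apply, Complex.star_def]
  have hzero : ∀ j, d j = 0 → ∀ k, B k j = 0 := by
    intro j hj k
    have h := hBentry j j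
    rw [Matrix.diagonal_apply_eq] at h
    have h0 : ∑ k, Complex.normSq (B k j) = 0 := by
      have hc : ((∑ k, Complex.normSq (B k j) : ℝ) : ℂ) = (d j : ℂ) := by
        push_cast
        rw [← h]
        exact Finset.sum_congr rfl fun k _ => Complex.normSq_eq_conj_mul_self
      have h' : (∑ k, Complex.normSq (B k j)) = d j := by exact_mod_cast hc
      rw [h', hj]
    have := (Finset.sum_eq_zero_iff_of_nonneg (fun k _ => Complex.normSq_nonneg (B k j))).mp
      h0 k (Finset.mem_univ k)
    exact Complex.normSq_eq_zero.mp this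
  set v : Fin n → EuclideanSpace ℂ (Fin n) :=
    fun j => WithLp.toLp 2 (fun k => ((Real.sqrt (d j) : ℂ))⁻¹ * B k j) with hv_def
  set s : Set (Fin n) := {j | d j ≠ 0} with hs_def
  have hsqrt_ne : ∀ j, d j ≠ 0 → (Real.sqrt (d j) : ℂ) ≠ 0 := by
    intro j hj
    simp only [ne_eq, Complex.ofReal_eq_zero]
    exact Real.sqrt_ne_zero'.mpr (lt_of_le_of_ne (hd0 j) (Ne.symm hj))
  have hsq : ∀ j, ((Real.sqrt (d j) : ℂ)) * (Real.sqrt (d j) : ℂ) = (d j : ℂ) := by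
    intro j
    rw [← Complex.ofReal_mul, Real.mul_self_sqrt (hd0 j)]
  have hv : Orthonormal ℂ (s.restrict v) := by
    rw [orthonormal_iff_ite]
    rintro ⟨i, hi⟩ ⟨j, hj⟩
    have hinner : (inner ℂ (v i) (v j) : ℂ) =
        ((Real.sqrt (d i) : ℂ))⁻¹ * ((Real.sqrt (d j) : ℂ))⁻¹ *
          Matrix.diagonal (fun i => (d i : ℂ)) i j := by
      rw [← hBentry i j]
      simp only [PiLp.inner_apply, RCLike.inner_apply, hv_def]
      rw [Finset.mul_sum]
      refine Finset.sum_congr rfl fun k _ => ?_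
      simp only [_root_.map_mul, map_inv₀, Complex.conj_ofReal]
      ring
    by_cases hij : i = j
    · subst hij
      rw [if_pos rfl]
      show inner ℂ (v i) (v i) = 1
      rw [hinner, Matrix.diagonal_apply_eq, ← hsq i]
      field_simp [hsqrt_ne i hi]
    · have hne : (⟨i, hi⟩ : s) ≠ ⟨j, hj⟩ := by simpa using hij
      rw [if_neg hne]
      show inner ℂ (v i) (v j) = 0
      rw [hinner, Matrix.diagonal_apply_ne _ hij, mul_zero]
  obtain ⟨b, hb⟩ := hv.exists_orthonormalBasis_extension_of_card_eq (by simp)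
  set U : Matrix (Fin n) (Fin n) ℂ := Matrix.of (fun k j => b j k) with hU_def
  have hU1 : Uᴴ * U = 1 := by
    ext i j
    have hbij := (orthonormal_iff_ite.mp b.orthonormal) i j
    rw [PiLp.inner_apply] at hbij
    simp only [RCLike.inner_apply] at hbij
    simp only [Matrix.mul_apply, Matrix.conjTranspose_apply, hU_def, Matrix.of_apply,
      Matrix.one_apply, Complex.star_def]
    rw [← hbij]
    exact Finset.sum_congr rfl fun _ _ => mul_comm _ _
  have hBU : B = U * Matrix.diagonal (fun j => (Real.sqrt (d j) : ℂ)) := by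
    ext k j
    rw [Matrix.mul_diagonal]
    by_cases hj : d j = 0
    · rw [hzero j hj k, hj]
      simp
    · have hbj : b j = v j := hb j hj
      have hUkj : U k j = ((Real.sqrt (d j) : ℂ))⁻¹ * B k j := by
        simp only [hU_def, Matrix.of_apply, hbj, hv_def]
      rw [hUkj, inv_mul_eq_div, div_mul_cancel₀ _ (hsqrt_ne j hj)]
  have hSU : S = U * Matrix.diagonal (fun j => (Real.sqrt (d j) : ℂ)) * Vᴴ := by
    have hSB : S = B * Vᴴ := by rw [hB_def, Matrix.mul_assoc, hV2, Matrix.mul_one]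
    rw [hSB, hBU]
  set e : Fin n → ℂ := fun j => (Real.sqrt (d j) : ℂ) + Complex.I * (Real.sqrt (1 - d j) : ℂ)
    with he_def
  set E : Matrix (Fin n) (Fin n) ℂ := Matrix.diagonal e with hE_def
  have hee : ∀ j, star (e j) * e j = 1 := by
    intro j
    have h1 : (Real.sqrt (d j) : ℂ) ^ 2 = (d j : ℂ) := by
      rw [← Complex.ofReal_pow, Real.sq_sqrt (hd0 j)]
    have h2 : (Real.sqrt (1 - d j) : ℂ) ^ 2 = ((1 - d j : ℝ) : ℂ) := by
      rw [← Complex.ofReal_pow, Real.sq_sqrt (by linarith [hd1 j])]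
    calc star (e j) * e j
        = ((Real.sqrt (d j) : ℂ) - Complex.I * (Real.sqrt (1 - d j) : ℂ)) *
            ((Real.sqrt (d j) : ℂ) + Complex.I * (Real.sqrt (1 - d j) : ℂ)) := by
          simp only [he_def, Complex.star_def, _root_.map_add, _root_.map_mul, Complex.conj_ofReal,
            Complex.conj_I]
          ring
      _ = (Real.sqrt (d j) : ℂ) ^ 2 + (Real.sqrt (1 - d j) : ℂ) ^ 2 := by
          linear_combination (-(Real.sqrt (1 - d j) : ℂ) ^ 2) * Complex.I_sq
      _ = 1 := by rw [h1, h2]; push_cast; ring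
  have hE1 : Eᴴ * E = 1 := by
    rw [hE_def, Matrix.diagonal_conjTranspose, Matrix.diagonal_mul_diagonal]
    convert Matrix.diagonal_one using 2
    ext j
    simpa using hee j
  have hE2 : E * Eᴴ = 1 := mul_eq_one_comm.mp hE1
  have heplus : ∀ j, e j + star (e j) = 2 * (Real.sqrt (d j) : ℂ) := by
    intro j
    simp only [he_def, Complex.star_def, _root_.map_add, _root_.map_mul, Complex.conj_ofReal, Complex.conj_I]
    ring
  have hmid : Matrix.diagonal (fun j => (Real.sqrt (d j) : ℂ)) = (2 : ℂ)⁻¹ • (E + Eᴴ) := by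
    ext i j
    simp only [Matrix.smul_apply, Matrix.add_apply, hE_def, Matrix.diagonal_conjTranspose,
      Matrix.diagonal_apply, Pi.star_apply, smul_eq_mul]
    by_cases hij : i = j
    · subst hij
      rw [if_pos rfl, if_pos rfl, if_pos rfl, heplus i]
      ring
    · rw [if_neg hij, if_neg hij, if_neg hij]
      ring
  refine ⟨2, ![1/2, 1/2], ![U * E * Vᴴ, U * Eᴴ * Vᴴ], ?_, ?_, ?_, ?_⟩
  · intro i; fin_cases i <;> norm_num
  · rw [Fin.sum_univ_two]; norm_num
  · intro i
    fin_cases i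
    · show (U * E * Vᴴ)ᴴ * (U * E * Vᴴ) = 1
      rw [Matrix.conjTranspose_mul, Matrix.conjTranspose_mul,
        Matrix.conjTranspose_conjTranspose]
      simp only [Matrix.mul_assoc]
      rw [← Matrix.mul_assoc Uᴴ U, hU1, Matrix.one_mul, ← Matrix.mul_assoc Eᴴ E, hE1,
        Matrix.one_mul, hV2]
    · show (U * Eᴴ * Vᴴ)ᴴ * (U * Eᴴ * Vᴴ) = 1
      rw [Matrix.conjTranspose_mul, Matrix.conjTranspose_mul,
        Matrix.conjTranspose_conjTranspose, Matrix.conjTranspose_conjTranspose]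
      simp only [Matrix.mul_assoc]
      rw [← Matrix.mul_assoc Uᴴ U, hU1, Matrix.one_mul, ← Matrix.mul_assoc E Eᴴ, hE2,
        Matrix.one_mul, hV2]
  · rw [Fin.sum_univ_two]
    simp only [Matrix.cons_val_zero, Matrix.cons_val_one, Matrix.head_cons]
    rw [hSU, hmid]
    push_cast
    rw [Matrix.mul_smul, Matrix.mul_add, Matrix.smul_mul, Matrix.add_mul, smul_add]
    norm_num
end
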